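/- arXiv:math/9807157 — 10 statements merged into one kernel-verified Lean document; each statement's English description precedes it below -/
import Mathlib

section
/- Let h be a complex number with exp(h) ≠ 1 and set [x] = (exp(hx/2) − exp(−hx/2))/(exp(h/2) − exp(−h/2)) for x ∈ ℂ. For all complex numbers a, b such that [a−b+1] ≠ 0 and [a−b−1] ≠ 0, one has ([a−1][b−1] − [2][a][b−1] + [a][b])/[a−b+1] + ([a−1][b−1] − [2][a−1][b] + [a][b])/[a−b−1] = 0. (Identity (26) of the paper.) -/
set_option maxHeartbeats 1600000

lemma qbr_key (q u v : ℂ) (hq : q ≠ 0) (hu : u ≠ 0) (hv : v ≠ 0)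
    (hsq : q ^ 2 - 1 ≠ 0) (hn1 : u ^ 2 * q ^ 2 - v ^ 2 ≠ 0)
    (hn2 : u ^ 2 - v ^ 2 * q ^ 2 ≠ 0) :
    ((u / q - q / u) / (q - q⁻¹) * ((v / q - q / v) / (q - q⁻¹))
        - (q * q - (q * q)⁻¹) / (q - q⁻¹) * ((u - u⁻¹) / (q - q⁻¹))
          * ((v / q - q / v) / (q - q⁻¹))
        + (u - u⁻¹) / (q - q⁻¹) * ((v - v⁻¹) / (q - q⁻¹)))
      / ((u / v * q - v / u / q) / (q - q⁻¹))
    + ((u / q - q / u) / (q - q⁻¹) * ((v / q - q / v) / (q - q⁻¹))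
        - (q * q - (q * q)⁻¹) / (q - q⁻¹) * ((u / q - q / u) / (q - q⁻¹))
          * ((v - v⁻¹) / (q - q⁻¹))
        + (u - u⁻¹) / (q - q⁻¹) * ((v - v⁻¹) / (q - q⁻¹)))
      / ((u / v / q - v / u * q) / (q - q⁻¹)) = 0 := by
  have hd : q - q⁻¹ ≠ 0 := by
    intro hc
    apply hsq
    field_simp at hc
    linear_combination hc
  have huvq : u * v * q ≠ 0 := mul_ne_zero (mul_ne_zero hu hv) hq
  have eD1 : u / v * q - v / u / q = (u ^ 2 * q ^ 2 - v ^ 2) / (u * v * q) := by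
    field_simp
  have eD2 : u / v / q - v / u * q = (u ^ 2 - v ^ 2 * q ^ 2) / (u * v * q) := by
    field_simp
  have hD1 : u / v * q - v / u / q ≠ 0 := by
    rw [eD1]; exact div_ne_zero hn1 huvq
  have hD2 : u / v / q - v / u * q ≠ 0 := by
    rw [eD2]; exact div_ne_zero hn2 huvq
  have e2 : (q * q - (q * q)⁻¹) / (q - q⁻¹) = q + q⁻¹ := by
    rw [div_eq_iff hd]; field_simp; ring
  rw [e2, div_div_eq_mul_div, div_div_eq_mul_div,
    div_add_div _ _ hD1 hD2, div_eq_zero_iff]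
  left
  have main :
      ((u / q - q / u) * (v / q - q / v)
          - (q + q⁻¹) * (u - u⁻¹) * (v / q - q / v)
          + (u - u⁻¹) * (v - v⁻¹)) * (u / v / q - v / u * q)
        + ((u / q - q / u) * (v / q - q / v)
          - (q + q⁻¹) * (u / q - q / u) * (v - v⁻¹)
          + (u - u⁻¹) * (v - v⁻¹)) * (u / v * q - v / u / q) = 0 := by
    have expand1 : ((u / q - q / u) * (v / q - q / v)
          - (q + q⁻¹) * (u - u⁻¹) * (v / q - q / v)
          + (u - u⁻¹) * (v - v⁻¹)) * (u / v / q - v / u * q)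
        = ((u ^ 2 - q ^ 2) * (v ^ 2 - q ^ 2)
              - (q ^ 2 + 1) * (u ^ 2 - 1) * (v ^ 2 - q ^ 2)
              + q ^ 2 * (u ^ 2 - 1) * (v ^ 2 - 1)) * (u ^ 2 - v ^ 2 * q ^ 2)
          / (u ^ 2 * v ^ 2 * q ^ 3) := by
      rw [show u - u⁻¹ = (u ^ 2 - 1) / u by field_simp,
          show v - v⁻¹ = (v ^ 2 - 1) / v by field_simp,
          show q + q⁻¹ = (q ^ 2 + 1) / q by field_simp,
          show u / q - q / u = (u ^ 2 - q ^ 2) / (u * q) by field_simp,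
          show v / q - q / v = (v ^ 2 - q ^ 2) / (v * q) by field_simp,
          show u / v / q - v / u * q = (u ^ 2 - v ^ 2 * q ^ 2) / (u * v * q) by field_simp]
      simp only [div_mul_div_comm]
      rw [div_sub_div _ _ (by apply_rules [mul_ne_zero]) (by apply_rules [mul_ne_zero]),
        div_add_div _ _ (by apply_rules [mul_ne_zero]) (by apply_rules [mul_ne_zero]),
        div_mul_div_comm,
        div_eq_div_iff (by apply_rules [mul_ne_zero]) (by simp [hu, hv, hq])]
      ring
    have expand2 : ((u / q - q / u) * (v / q - q / v)
          - (q + q⁻¹) * (u / q - q / u) * (v - v⁻¹)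
          + (u - u⁻¹) * (v - v⁻¹)) * (u / v * q - v / u / q)
        = ((u ^ 2 - q ^ 2) * (v ^ 2 - q ^ 2)
              - (q ^ 2 + 1) * (u ^ 2 - q ^ 2) * (v ^ 2 - 1)
              + q ^ 2 * (u ^ 2 - 1) * (v ^ 2 - 1)) * (u ^ 2 * q ^ 2 - v ^ 2)
          / (u ^ 2 * v ^ 2 * q ^ 3) := by
      rw [show u - u⁻¹ = (u ^ 2 - 1) / u by field_simp,
          show v - v⁻¹ = (v ^ 2 - 1) / v by field_simp,
          show q + q⁻¹ = (q ^ 2 + 1) / q by field_simp,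
          show u / q - q / u = (u ^ 2 - q ^ 2) / (u * q) by field_simp,
          show v / q - q / v = (v ^ 2 - q ^ 2) / (v * q) by field_simp,
          show u / v * q - v / u / q = (u ^ 2 * q ^ 2 - v ^ 2) / (u * v * q) by field_simp]
      simp only [div_mul_div_comm]
      rw [div_sub_div _ _ (by apply_rules [mul_ne_zero]) (by apply_rules [mul_ne_zero]),
        div_add_div _ _ (by apply_rules [mul_ne_zero]) (by apply_rules [mul_ne_zero]),
        div_mul_div_comm,
        div_eq_div_iff (by apply_rules [mul_ne_zero]) (by simp [hu, hv, hq])]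
      ring
    rw [expand1, expand2, ← add_div, show
        ((u ^ 2 - q ^ 2) * (v ^ 2 - q ^ 2)
              - (q ^ 2 + 1) * (u ^ 2 - 1) * (v ^ 2 - q ^ 2)
              + q ^ 2 * (u ^ 2 - 1) * (v ^ 2 - 1)) * (u ^ 2 - v ^ 2 * q ^ 2)
          + ((u ^ 2 - q ^ 2) * (v ^ 2 - q ^ 2)
              - (q ^ 2 + 1) * (u ^ 2 - q ^ 2) * (v ^ 2 - 1)
              + q ^ 2 * (u ^ 2 - 1) * (v ^ 2 - 1)) * (u ^ 2 * q ^ 2 - v ^ 2)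
        = (0 : ℂ) by ring, zero_div]
  linear_combination ((q - q⁻¹) * ((q - q⁻¹)⁻¹) ^ 2) * main

/-- The q-bracket `[x] = (exp(hx/2) - exp(-hx/2))/(exp(h/2) - exp(-h/2))`. -/
noncomputable def qbr (h x : ℂ) : ℂ :=
  (Complex.exp (h * x / 2) - Complex.exp (-(h * x) / 2)) /
    (Complex.exp (h / 2) - Complex.exp (-h / 2))

/-- Identity (26). -/
theorem identity_26 (h : ℂ) (hh : Complex.exp h ≠ 1) (a b : ℂ)
    (h1 : qbr h (a - b + 1) ≠ 0) (h2 : qbr h (a - b - 1) ≠ 0) :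
    (qbr h (a - 1) * qbr h (b - 1) - qbr h 2 * qbr h a * qbr h (b - 1)
        + qbr h a * qbr h b) / qbr h (a - b + 1)
      + (qbr h (a - 1) * qbr h (b - 1) - qbr h 2 * qbr h (a - 1) * qbr h b
        + qbr h a * qbr h b) / qbr h (a - b - 1) = 0 := by
  have hq0 : Complex.exp (h / 2) ≠ 0 := Complex.exp_ne_zero _
  have hu0 : Complex.exp (h * a / 2) ≠ 0 := Complex.exp_ne_zero _
  have hv0 : Complex.exp (h * b / 2) ≠ 0 := Complex.exp_ne_zero _
  have hqq : Complex.exp (h / 2) * Complex.exp (h / 2) ≠ 1 := by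
    rw [← Complex.exp_add]
    rwa [show h / 2 + h / 2 = h by ring]
  have eneg : Complex.exp (-h / 2) = (Complex.exp (h / 2))⁻¹ := by
    rw [show -h / 2 = -(h / 2) by ring, Complex.exp_neg]
  have hsq : Complex.exp (h / 2) ^ 2 - 1 ≠ 0 := by
    intro hc
    apply hqq
    linear_combination hc
  have e2 : Complex.exp (h * 2 / 2) = Complex.exp (h / 2) * Complex.exp (h / 2) := by
    rw [show h * 2 / 2 = h / 2 + h / 2 by ring, Complex.exp_add]
  have e2' : Complex.exp (-(h * 2) / 2)
      = (Complex.exp (h / 2) * Complex.exp (h / 2))⁻¹ := by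
    rw [show -(h * 2) / 2 = -(h / 2 + h / 2) by ring, Complex.exp_neg, Complex.exp_add]
  have ea' : Complex.exp (-(h * a) / 2) = (Complex.exp (h * a / 2))⁻¹ := by
    rw [show -(h * a) / 2 = -(h * a / 2) by ring, Complex.exp_neg]
  have eb' : Complex.exp (-(h * b) / 2) = (Complex.exp (h * b / 2))⁻¹ := by
    rw [show -(h * b) / 2 = -(h * b / 2) by ring, Complex.exp_neg]
  have ea1 : Complex.exp (h * (a - 1) / 2)
      = Complex.exp (h * a / 2) / Complex.exp (h / 2) := by
    rw [show h * (a - 1) / 2 = h * a / 2 - h / 2 by ring, Complex.exp_sub]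
  have ea1' : Complex.exp (-(h * (a - 1)) / 2)
      = Complex.exp (h / 2) / Complex.exp (h * a / 2) := by
    rw [show -(h * (a - 1)) / 2 = h / 2 - h * a / 2 by ring, Complex.exp_sub]
  have eb1 : Complex.exp (h * (b - 1) / 2)
      = Complex.exp (h * b / 2) / Complex.exp (h / 2) := by
    rw [show h * (b - 1) / 2 = h * b / 2 - h / 2 by ring, Complex.exp_sub]
  have eb1' : Complex.exp (-(h * (b - 1)) / 2)
      = Complex.exp (h / 2) / Complex.exp (h * b / 2) := by
    rw [show -(h * (b - 1)) / 2 = h / 2 - h * b / 2 by ring, Complex.exp_sub]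
  have ep : Complex.exp (h * (a - b + 1) / 2)
      = Complex.exp (h * a / 2) / Complex.exp (h * b / 2) * Complex.exp (h / 2) := by
    rw [show h * (a - b + 1) / 2 = h * a / 2 - h * b / 2 + h / 2 by ring,
      Complex.exp_add, Complex.exp_sub]
  have ep' : Complex.exp (-(h * (a - b + 1)) / 2)
      = Complex.exp (h * b / 2) / Complex.exp (h * a / 2) / Complex.exp (h / 2) := by
    rw [show -(h * (a - b + 1)) / 2 = h * b / 2 - h * a / 2 - h / 2 by ring,
      Complex.exp_sub, Complex.exp_sub]
  have em : Complex.exp (h * (a - b - 1) / 2)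
      = Complex.exp (h * a / 2) / Complex.exp (h * b / 2) / Complex.exp (h / 2) := by
    rw [show h * (a - b - 1) / 2 = h * a / 2 - h * b / 2 - h / 2 by ring,
      Complex.exp_sub, Complex.exp_sub]
  have em' : Complex.exp (-(h * (a - b - 1)) / 2)
      = Complex.exp (h * b / 2) / Complex.exp (h * a / 2) * Complex.exp (h / 2) := by
    rw [show -(h * (a - b - 1)) / 2 = h * b / 2 - h * a / 2 + h / 2 by ring,
      Complex.exp_add, Complex.exp_sub]
  have hn1 : Complex.exp (h * a / 2) / Complex.exp (h * b / 2) * Complex.exp (h / 2)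
      - Complex.exp (h * b / 2) / Complex.exp (h * a / 2) / Complex.exp (h / 2) ≠ 0 := by
    intro hc
    apply h1
    rw [qbr, ep, ep', eneg, hc, zero_div]
  have hn2 : Complex.exp (h * a / 2) / Complex.exp (h * b / 2) / Complex.exp (h / 2)
      - Complex.exp (h * b / 2) / Complex.exp (h * a / 2) * Complex.exp (h / 2) ≠ 0 := by
    intro hc
    apply h2
    rw [qbr, em, em', eneg, hc, zero_div]
  simp only [qbr, ea1, ea1', eb1, eb1', e2, e2', ea', eb', ep, ep', em, em', eneg, mul_one]
  refine qbr_key _ _ _ hq0 hu0 hv0 hsq ?_ ?_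
  · intro hc
    apply hn1
    rw [show Complex.exp (h * a / 2) / Complex.exp (h * b / 2) * Complex.exp (h / 2)
        - Complex.exp (h * b / 2) / Complex.exp (h * a / 2) / Complex.exp (h / 2)
      = (Complex.exp (h * a / 2) ^ 2 * Complex.exp (h / 2) ^ 2 - Complex.exp (h * b / 2) ^ 2)
        / (Complex.exp (h * a / 2) * Complex.exp (h * b / 2) * Complex.exp (h / 2)) by
      field_simp, hc, zero_div]
  · intro hc
    apply hn2
    rw [show Complex.exp (h * a / 2) / Complex.exp (h * b / 2) / Complex.exp (h / 2)
        - Complex.exp (h * b / 2) / Complex.exp (h * a / 2) * Complex.exp (h / 2)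
      = (Complex.exp (h * a / 2) ^ 2 - Complex.exp (h * b / 2) ^ 2 * Complex.exp (h / 2) ^ 2)
        / (Complex.exp (h * a / 2) * Complex.exp (h * b / 2) * Complex.exp (h / 2)) by
      field_simp, hc, zero_div]
end

section
/- Let h be a complex number with exp(h) ≠ 1 and set [x] = (exp(hx/2) − exp(−hx/2))/(exp(h/2) − exp(−h/2)) for x ∈ ℂ. For all complex numbers a, b, c, d, e such that [d−e−1], [d−e+1], [c−a−1], [c−a+1] are all nonzero, one has ([a−b−1][c−b−1] − [2][a−b][c−b−1] + [a−b][c−b]) · ( [a−d][c−e−1]/([d−e−1][c−a−1]) + [c−d−1][a−e]/([d−e+1][c−a−1]) ) + ( [a−e−1][c−d]/([d−e−1][c−a+1]) + [a−d−1][c−e]/([d−e+1][c−a+1]) ) · ([a−b−1][c−b−1] − [2][a−b−1][c−b] + [a−b][c−b]) = 0. (Identity (25) of the paper.) -/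
set_option maxHeartbeats 1000000

lemma qbr_eq (h x : ℂ) : qbr h x =
    (Complex.exp (h / 2 * x) - (Complex.exp (h / 2 * x))⁻¹) /
      (Complex.exp (h / 2) - (Complex.exp (h / 2))⁻¹) := by
  unfold qbr
  rw [show h * x / 2 = h / 2 * x by ring, show -(h * x) / 2 = -(h / 2 * x) by ring,
    show -h / 2 = -(h / 2) by ring, Complex.exp_neg, Complex.exp_neg]

lemma qbr_denom_ne (h : ℂ) (hh : Complex.exp h ≠ 1) :
    Complex.exp (h / 2) - (Complex.exp (h / 2))⁻¹ ≠ 0 := by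
  intro hcon
  apply hh
  have h0 : Complex.exp (h / 2) ≠ 0 := Complex.exp_ne_zero _
  have := sub_eq_zero.mp hcon
  field_simp at this
  rw [show h = h / 2 + h / 2 by ring, Complex.exp_add, ← sq]
  exact this

lemma qbr_neg (h x : ℂ) : qbr h (-x) = -qbr h x := by
  unfold qbr
  rw [show h * -x / 2 = -(h * x) / 2 by ring, show -(h * -x) / 2 = h * x / 2 by ring]
  ring

lemma qbr_one (h : ℂ) (hh : Complex.exp h ≠ 1) : qbr h 1 = 1 := by
  rw [qbr_eq, mul_one, div_self (qbr_denom_ne h hh)]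

/-- The fundamental product-difference identity for q-brackets. -/
lemma qbr_key_s1 (h : ℂ) (hh : Complex.exp h ≠ 1) (m n p : ℂ) :
    qbr h (m + p) * qbr h (m - p) - qbr h (m + n) * qbr h (m - n)
      = qbr h (n + p) * qbr h (n - p) := by
  simp only [qbr_eq]
  rw [show h / 2 * (m + p) = h / 2 * m + h / 2 * p by ring,
    show h / 2 * (m - p) = h / 2 * m - h / 2 * p by ring,
    show h / 2 * (m + n) = h / 2 * m + h / 2 * n by ring,
    show h / 2 * (m - n) = h / 2 * m - h / 2 * n by ring,
    show h / 2 * (n + p) = h / 2 * n + h / 2 * p by ring,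
    show h / 2 * (n - p) = h / 2 * n - h / 2 * p by ring]
  simp only [Complex.exp_add, Complex.exp_sub]
  have hM : Complex.exp (h / 2 * m) ≠ 0 := Complex.exp_ne_zero _
  have hN : Complex.exp (h / 2 * n) ≠ 0 := Complex.exp_ne_zero _
  have hP : Complex.exp (h / 2 * p) ≠ 0 := Complex.exp_ne_zero _
  have hs : Complex.exp (h / 2) - (Complex.exp (h / 2))⁻¹ ≠ 0 := qbr_denom_ne h hh
  set M := Complex.exp (h / 2 * m)
  set N := Complex.exp (h / 2 * n)
  set P := Complex.exp (h / 2 * p)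
  set s := Complex.exp (h / 2) - (Complex.exp (h / 2))⁻¹ with hsdef
  rw [div_mul_div_comm, div_mul_div_comm, div_mul_div_comm, div_sub_div_same,
    div_eq_div_iff (mul_ne_zero hs hs) (mul_ne_zero hs hs)]
  field_simp
  ring

/-- `[2][x] = [x+1] + [x-1]`. -/
lemma qbr_two_mul (h : ℂ) (hh : Complex.exp h ≠ 1) (x : ℂ) :
    qbr h 2 * qbr h x = qbr h (x + 1) + qbr h (x - 1) := by
  simp only [qbr_eq]
  rw [show h / 2 * 2 = h / 2 + h / 2 by ring,
    show h / 2 * (x + 1) = h / 2 * x + h / 2 by ring,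
    show h / 2 * (x - 1) = h / 2 * x - h / 2 by ring]
  simp only [Complex.exp_add, Complex.exp_sub]
  have hX : Complex.exp (h / 2 * x) ≠ 0 := Complex.exp_ne_zero _
  have hQ : Complex.exp (h / 2) ≠ 0 := Complex.exp_ne_zero _
  have hs : Complex.exp (h / 2) - (Complex.exp (h / 2))⁻¹ ≠ 0 := qbr_denom_ne h hh
  rw [div_mul_div_comm, ← add_div, div_eq_div_iff (mul_ne_zero hs hs) hs]
  field_simp
  ring

/-- Identity (25). -/
theorem identity_25 (h : ℂ) (hh : Complex.exp h ≠ 1) (a b c d e : ℂ)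
    (h1 : qbr h (d - e - 1) ≠ 0) (h2 : qbr h (d - e + 1) ≠ 0)
    (h3 : qbr h (c - a - 1) ≠ 0) (h4 : qbr h (c - a + 1) ≠ 0) :
    (qbr h (a - b - 1) * qbr h (c - b - 1)
        - qbr h 2 * qbr h (a - b) * qbr h (c - b - 1)
        + qbr h (a - b) * qbr h (c - b)) *
      (qbr h (a - d) * qbr h (c - e - 1) / (qbr h (d - e - 1) * qbr h (c - a - 1))
        + qbr h (c - d - 1) * qbr h (a - e) / (qbr h (d - e + 1) * qbr h (c - a - 1)))
    + (qbr h (a - e - 1) * qbr h (c - d) / (qbr h (d - e - 1) * qbr h (c - a + 1))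
        + qbr h (a - d - 1) * qbr h (c - e) / (qbr h (d - e + 1) * qbr h (c - a + 1))) *
      (qbr h (a - b - 1) * qbr h (c - b - 1)
        - qbr h 2 * qbr h (a - b - 1) * qbr h (c - b)
        + qbr h (a - b) * qbr h (c - b)) = 0 := by
  -- k1 : [a-b][c-b] - [a-b+1][c-b-1] = [a-c+1][1]
  have k1 := qbr_key_s1 h hh ((a + c) / 2 - b) ((a - c) / 2 + 1) ((a - c) / 2)
  rw [show (a + c) / 2 - b + (a - c) / 2 = a - b by ring,
    show (a + c) / 2 - b - (a - c) / 2 = c - b by ring,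
    show (a + c) / 2 - b + ((a - c) / 2 + 1) = a - b + 1 by ring,
    show (a + c) / 2 - b - ((a - c) / 2 + 1) = c - b - 1 by ring,
    show (a - c) / 2 + 1 + (a - c) / 2 = a - c + 1 by ring,
    show (a - c) / 2 + 1 - (a - c) / 2 = 1 by ring, qbr_one h hh, mul_one] at k1
  -- k2 : [a-b][c-b] - [a-b-1][c-b+1] = [a-c-1][-1]
  have k2 := qbr_key_s1 h hh ((a + c) / 2 - b) ((a - c) / 2 - 1) ((a - c) / 2)
  rw [show (a + c) / 2 - b + (a - c) / 2 = a - b by ring,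
    show (a + c) / 2 - b - (a - c) / 2 = c - b by ring,
    show (a + c) / 2 - b + ((a - c) / 2 - 1) = a - b - 1 by ring,
    show (a + c) / 2 - b - ((a - c) / 2 - 1) = c - b + 1 by ring,
    show (a - c) / 2 - 1 + (a - c) / 2 = a - c - 1 by ring,
    show (a - c) / 2 - 1 - (a - c) / 2 = -1 by ring, qbr_neg, qbr_one h hh] at k2
  -- k3 : [a-e-1][c-d] - [a-d][c-e-1] = [a-c][e-d+1]
  have k3 := qbr_key_s1 h hh ((a + c - d - e - 1) / 2) ((a - c - d + e + 1) / 2)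
    ((a - c + d - e - 1) / 2)
  rw [show (a + c - d - e - 1) / 2 + (a - c + d - e - 1) / 2 = a - e - 1 by ring,
    show (a + c - d - e - 1) / 2 - (a - c + d - e - 1) / 2 = c - d by ring,
    show (a + c - d - e - 1) / 2 + (a - c - d + e + 1) / 2 = a - d by ring,
    show (a + c - d - e - 1) / 2 - (a - c - d + e + 1) / 2 = c - e - 1 by ring,
    show (a - c - d + e + 1) / 2 + (a - c + d - e - 1) / 2 = a - c by ring,
    show (a - c - d + e + 1) / 2 - (a - c + d - e - 1) / 2 = -(d - e - 1) by ring,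
    qbr_neg] at k3
  -- k4 : [a-d-1][c-e] - [c-d-1][a-e] = [e-d-1][c-a]
  have k4 := qbr_key_s1 h hh ((a + c - d - e - 1) / 2) ((c - a - d + e - 1) / 2)
    ((a - c - d + e - 1) / 2)
  rw [show (a + c - d - e - 1) / 2 + (a - c - d + e - 1) / 2 = a - d - 1 by ring,
    show (a + c - d - e - 1) / 2 - (a - c - d + e - 1) / 2 = c - e by ring,
    show (a + c - d - e - 1) / 2 + (c - a - d + e - 1) / 2 = c - d - 1 by ring,
    show (a + c - d - e - 1) / 2 - (c - a - d + e - 1) / 2 = a - e by ring,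
    show (c - a - d + e - 1) / 2 + (a - c - d + e - 1) / 2 = -(d - e + 1) by ring,
    show (c - a - d + e - 1) / 2 - (a - c - d + e - 1) / 2 = -(a - c) by ring] at k4
  simp only [qbr_neg] at k4
  have L1 := qbr_two_mul h hh (a - b)
  have L2 := qbr_two_mul h hh (c - b)
  -- F1 : first bracket factor equals -[c-a-1]
  have F1 : qbr h (a - b - 1) * qbr h (c - b - 1)
      - qbr h 2 * qbr h (a - b) * qbr h (c - b - 1)
      + qbr h (a - b) * qbr h (c - b) = -qbr h (c - a - 1) := by
    rw [show c - a - 1 = -(a - c + 1) by ring, qbr_neg, neg_neg]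
    linear_combination k1 - qbr h (c - b - 1) * L1
  -- F2 : second bracket factor equals [c-a+1]
  have F2 : qbr h (a - b - 1) * qbr h (c - b - 1)
      - qbr h 2 * qbr h (a - b - 1) * qbr h (c - b)
      + qbr h (a - b) * qbr h (c - b) = qbr h (c - a + 1) := by
    rw [show c - a + 1 = -(a - c - 1) by ring, qbr_neg]
    linear_combination k2 - qbr h (a - b - 1) * L2
  rw [F1, F2]
  have i1 : qbr h (d - e - 1) * (qbr h (d - e - 1))⁻¹ = 1 := mul_inv_cancel₀ h1
  have i2 : qbr h (d - e + 1) * (qbr h (d - e + 1))⁻¹ = 1 := mul_inv_cancel₀ h2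
  have i3 : qbr h (c - a - 1) * (qbr h (c - a - 1))⁻¹ = 1 := mul_inv_cancel₀ h3
  have i4 : qbr h (c - a + 1) * (qbr h (c - a + 1))⁻¹ = 1 := mul_inv_cancel₀ h4
  linear_combination
    (-(qbr h (a - d) * qbr h (c - e - 1) * (qbr h (d - e - 1))⁻¹
        + qbr h (c - d - 1) * qbr h (a - e) * (qbr h (d - e + 1))⁻¹)) * i3
    + (qbr h (a - e - 1) * qbr h (c - d) * (qbr h (d - e - 1))⁻¹
        + qbr h (a - d - 1) * qbr h (c - e) * (qbr h (d - e + 1))⁻¹) * i4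
    + (-(qbr h (d - e - 1))⁻¹) * k3
    + (-(qbr h (d - e + 1))⁻¹) * k4
    + (-qbr h (a - c)) * i1
    + qbr h (a - c) * i2
    + (2 * (qbr h (d - e - 1))⁻¹) * k3
    + (2 * (qbr h (d - e + 1))⁻¹) * k4
end

section
/- Let h be a complex number with exp(h) ≠ 1 and set [x] = (exp(hx/2) − exp(−hx/2))/(exp(h/2) − exp(−h/2)) for x ∈ ℂ. For all complex numbers a, b, c, d such that [c−b−1] ≠ 0 and [b−c+1] ≠ 0, one has [a−b][c−d−1]/[c−b−1] + [a−c+1][b−d]/[b−c+1] = [a−d]. (First identity of (A46).) -/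
set_option maxHeartbeats 1000000

lemma aux_frac (N1 N2 N3 N4 N5 N7 Dq : ℂ) (h3 : N3 ≠ 0) (hDq : Dq ≠ 0)
    (key : N1 * N2 - N4 * N5 = N7 * N3) :
    N1 / Dq * (N2 / Dq) / (N3 / Dq) + N4 / Dq * (N5 / Dq) / (-N3 / Dq) = N7 / Dq := by
  field_simp
  linear_combination key

/-- First identity of (A46). -/
theorem identity_A46_first (h : ℂ) (hh : Complex.exp h ≠ 1) (a b c d : ℂ)
    (h1 : qbr h (c - b - 1) ≠ 0) (h2 : qbr h (b - c + 1) ≠ 0) :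
    qbr h (a - b) * qbr h (c - d - 1) / qbr h (c - b - 1)
      + qbr h (a - c + 1) * qbr h (b - d) / qbr h (b - c + 1) = qbr h (a - d) := by
  have hD : Complex.exp (h / 2) - Complex.exp (-h / 2) ≠ 0 := by
    intro hE
    apply hh
    have he : Complex.exp (h / 2) = Complex.exp (-h / 2) := sub_eq_zero.mp hE
    calc Complex.exp h = Complex.exp (h / 2) * Complex.exp (h / 2) := by
            rw [← Complex.exp_add]; congr 1; ring
      _ = Complex.exp (h / 2) * Complex.exp (-h / 2) := by rw [he]
      _ = 1 := by rw [← Complex.exp_add, show h / 2 + -h / 2 = 0 by ring, Complex.exp_zero]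
  have n1 : Complex.exp (h * (c - b - 1) / 2) - Complex.exp (-(h * (c - b - 1)) / 2) ≠ 0 := by
    intro hE; apply h1; unfold qbr; rw [hE, zero_div]
  -- the negation relation
  have hneg : Complex.exp (h * (b - c + 1) / 2) - Complex.exp (-(h * (b - c + 1)) / 2)
      = -(Complex.exp (h * (c - b - 1) / 2) - Complex.exp (-(h * (c - b - 1)) / 2)) := by
    rw [show h * (b - c + 1) / 2 = -(h * (c - b - 1)) / 2 by ring,
        show -(h * (b - c + 1)) / 2 = h * (c - b - 1) / 2 by ring]
    ring
  -- key polynomial identity between the numerators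
  have key : (Complex.exp (h * (a - b) / 2) - Complex.exp (-(h * (a - b)) / 2))
        * (Complex.exp (h * (c - d - 1) / 2) - Complex.exp (-(h * (c - d - 1)) / 2))
      - (Complex.exp (h * (a - c + 1) / 2) - Complex.exp (-(h * (a - c + 1)) / 2))
        * (Complex.exp (h * (b - d) / 2) - Complex.exp (-(h * (b - d)) / 2))
      = (Complex.exp (h * (a - d) / 2) - Complex.exp (-(h * (a - d)) / 2))
        * (Complex.exp (h * (c - b - 1) / 2) - Complex.exp (-(h * (c - b - 1)) / 2)) := by
    simp only [sub_mul, mul_sub, ← Complex.exp_add]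
    ring_nf
  unfold qbr
  rw [hneg]
  exact aux_frac _ _ _ _ _ _ _ n1 hD key
end

section
/- Let h be a complex number with exp(h) ≠ 1 and set [x] = (exp(hx/2) − exp(−hx/2))/(exp(h/2) − exp(−h/2)) for x ∈ ℂ. For all complex numbers a, b, c, d such that [c−b+1] ≠ 0 and [b−c−1] ≠ 0, one has −[a−b+1][c−d]/[c−b+1] − [a−c][b−d−1]/[b−c−1] = −[a−d]. (Second identity of (A46).) -/
lemma qbr_expand (h x : ℂ) :
    qbr h x = (Complex.exp (h * x / 2) - (Complex.exp (h * x / 2))⁻¹) /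
      (Complex.exp (h / 2) - (Complex.exp (h / 2))⁻¹) := by
  unfold qbr
  rw [show -(h * x) / 2 = -(h * x / 2) by ring, Complex.exp_neg,
    show -h / 2 = -(h / 2) by ring, Complex.exp_neg]

lemma frac1 (x y p : ℂ) (hx : x ≠ 0) (hy : y ≠ 0) (hp : p ≠ 0) :
    x * y⁻¹ * p - (x * y⁻¹ * p)⁻¹ = (x * x * p * p - y * y) / (x * y * p) := by
  rw [mul_inv, mul_inv, inv_inv]; field_simp

lemma frac2 (x y : ℂ) (hx : x ≠ 0) (hy : y ≠ 0) :
    x * y⁻¹ - (x * y⁻¹)⁻¹ = (x * x - y * y) / (x * y) := by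
  rw [mul_inv, inv_inv, eq_div_iff (mul_ne_zero hx hy)]
  have h : (x * y⁻¹ - x⁻¹ * y) * (x * y) = x * x * (y⁻¹ * y) - x⁻¹ * x * (y * y) := by
    ring
  rw [h, inv_mul_cancel₀ hy, inv_mul_cancel₀ hx, mul_one, one_mul]

lemma frac3 (x y p : ℂ) (hx : x ≠ 0) (hy : y ≠ 0) (hp : p ≠ 0) :
    x * y⁻¹ * p⁻¹ - (x * y⁻¹ * p⁻¹)⁻¹ = (x * x - y * y * p * p) / (x * y * p) := by
  rw [mul_inv, mul_inv, inv_inv, inv_inv]; field_simp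

lemma frac4 (p : ℂ) (hp : p ≠ 0) : p - p⁻¹ = (p * p - 1) / p := by field_simp

lemma divq (x y z q : ℂ) (hq : q ≠ 0) (hz : z ≠ 0) :
    x / q * (y / q) / (z / q) = x * y / z / q := by
  field_simp

set_option maxHeartbeats 1600000 in
lemma key (p A B C D : ℂ) (hp : p ≠ 0) (hA : A ≠ 0) (hB : B ≠ 0) (hC : C ≠ 0) (hD : D ≠ 0)
    (hq : p - p⁻¹ ≠ 0)
    (n1 : C * B⁻¹ * p - (C * B⁻¹ * p)⁻¹ ≠ 0)
    (n2 : B * C⁻¹ * p⁻¹ - (B * C⁻¹ * p⁻¹)⁻¹ ≠ 0) :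
    -((A * B⁻¹ * p - (A * B⁻¹ * p)⁻¹) / (p - p⁻¹) *
        ((C * D⁻¹ - (C * D⁻¹)⁻¹) / (p - p⁻¹)) /
        ((C * B⁻¹ * p - (C * B⁻¹ * p)⁻¹) / (p - p⁻¹)))
      - (A * C⁻¹ - (A * C⁻¹)⁻¹) / (p - p⁻¹) *
        ((B * D⁻¹ * p⁻¹ - (B * D⁻¹ * p⁻¹)⁻¹) / (p - p⁻¹)) /
        ((B * C⁻¹ * p⁻¹ - (B * C⁻¹ * p⁻¹)⁻¹) / (p - p⁻¹))
      = -((A * D⁻¹ - (A * D⁻¹)⁻¹) / (p - p⁻¹)) := by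
  rw [divq _ _ _ _ hq n1, divq _ _ _ _ hq n2,
    ← neg_div (p - p⁻¹), ← neg_div (p - p⁻¹), div_sub_div_same]
  congr 1
  have hq2 : p * p - 1 ≠ 0 := by
    intro hz; apply hq; rw [frac4 p hp, hz, zero_div]
  have m1 : C * C * p * p - B * B ≠ 0 := by
    intro hz; apply n1; rw [frac1 C B p hC hB hp, hz, zero_div]
  have m2 : B * B - C * C * p * p ≠ 0 := by
    intro hz; apply n2; rw [frac3 B C p hB hC hp, hz, zero_div]
  rw [frac1 A B p hA hB hp, frac1 C B p hC hB hp, frac2 C D hC hD, frac2 A C hA hC,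
    frac2 A D hA hD, frac3 B D p hB hD hp, frac3 B C p hB hC hp]
  rw [div_mul_div_comm, div_div_div_eq, div_mul_div_comm, div_div_div_eq]
  rw [← neg_div (A * B * p * (C * D) * (C * C * p * p - B * B)), ← neg_div (A * D)]
  rw [div_sub_div _ _ (mul_ne_zero (mul_ne_zero (mul_ne_zero (mul_ne_zero hA hB) hp) (mul_ne_zero hC hD)) m1)
    (mul_ne_zero (mul_ne_zero (mul_ne_zero hA hC) (mul_ne_zero (mul_ne_zero hB hD) hp)) m2)]
  rw [div_eq_div_iff
    (mul_ne_zero (mul_ne_zero (mul_ne_zero (mul_ne_zero (mul_ne_zero hA hB) hp) (mul_ne_zero hC hD)) m1)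
      (mul_ne_zero (mul_ne_zero (mul_ne_zero hA hC) (mul_ne_zero (mul_ne_zero hB hD) hp)) m2))
    (mul_ne_zero hA hD)]
  ring

/-- Second identity of (A46). -/
theorem identity_A46_second (h : ℂ) (hh : Complex.exp h ≠ 1) (a b c d : ℂ)
    (h1 : qbr h (c - b + 1) ≠ 0) (h2 : qbr h (b - c - 1) ≠ 0) :
    -(qbr h (a - b + 1) * qbr h (c - d) / qbr h (c - b + 1))
      - qbr h (a - c) * qbr h (b - d - 1) / qbr h (b - c - 1) = -qbr h (a - d) := by
  have hp : Complex.exp (h / 2) ≠ 0 := Complex.exp_ne_zero _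
  have hA : Complex.exp (h * a / 2) ≠ 0 := Complex.exp_ne_zero _
  have hB : Complex.exp (h * b / 2) ≠ 0 := Complex.exp_ne_zero _
  have hC : Complex.exp (h * c / 2) ≠ 0 := Complex.exp_ne_zero _
  have hD : Complex.exp (h * d / 2) ≠ 0 := Complex.exp_ne_zero _
  have e1 : Complex.exp (h * (a - b + 1) / 2)
      = Complex.exp (h * a / 2) * (Complex.exp (h * b / 2))⁻¹ * Complex.exp (h / 2) := by
    rw [show h * (a - b + 1) / 2 = h * a / 2 + -(h * b / 2) + h / 2 by ring,
      Complex.exp_add, Complex.exp_add, Complex.exp_neg]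
  have e2 : Complex.exp (h * (c - d) / 2)
      = Complex.exp (h * c / 2) * (Complex.exp (h * d / 2))⁻¹ := by
    rw [show h * (c - d) / 2 = h * c / 2 + -(h * d / 2) by ring,
      Complex.exp_add, Complex.exp_neg]
  have e3 : Complex.exp (h * (c - b + 1) / 2)
      = Complex.exp (h * c / 2) * (Complex.exp (h * b / 2))⁻¹ * Complex.exp (h / 2) := by
    rw [show h * (c - b + 1) / 2 = h * c / 2 + -(h * b / 2) + h / 2 by ring,
      Complex.exp_add, Complex.exp_add, Complex.exp_neg]
  have e4 : Complex.exp (h * (a - c) / 2)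
      = Complex.exp (h * a / 2) * (Complex.exp (h * c / 2))⁻¹ := by
    rw [show h * (a - c) / 2 = h * a / 2 + -(h * c / 2) by ring,
      Complex.exp_add, Complex.exp_neg]
  have e5 : Complex.exp (h * (b - d - 1) / 2)
      = Complex.exp (h * b / 2) * (Complex.exp (h * d / 2))⁻¹ * (Complex.exp (h / 2))⁻¹ := by
    rw [show h * (b - d - 1) / 2 = h * b / 2 + -(h * d / 2) + -(h / 2) by ring,
      Complex.exp_add, Complex.exp_add, Complex.exp_neg, Complex.exp_neg]
  have e6 : Complex.exp (h * (b - c - 1) / 2)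
      = Complex.exp (h * b / 2) * (Complex.exp (h * c / 2))⁻¹ * (Complex.exp (h / 2))⁻¹ := by
    rw [show h * (b - c - 1) / 2 = h * b / 2 + -(h * c / 2) + -(h / 2) by ring,
      Complex.exp_add, Complex.exp_add, Complex.exp_neg, Complex.exp_neg]
  have e7 : Complex.exp (h * (a - d) / 2)
      = Complex.exp (h * a / 2) * (Complex.exp (h * d / 2))⁻¹ := by
    rw [show h * (a - d) / 2 = h * a / 2 + -(h * d / 2) by ring,
      Complex.exp_add, Complex.exp_neg]
  have hden : Complex.exp (h / 2) - (Complex.exp (h / 2))⁻¹ ≠ 0 := by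
    intro hEq
    apply hh
    have hpe : Complex.exp (h / 2) = (Complex.exp (h / 2))⁻¹ := by
      linear_combination hEq
    have hpp : Complex.exp (h / 2) * Complex.exp (h / 2) = 1 := by
      nth_rewrite 2 [hpe]; exact mul_inv_cancel₀ hp
    calc Complex.exp h = Complex.exp (h / 2) * Complex.exp (h / 2) := by
          rw [← Complex.exp_add]; congr 1; ring
      _ = 1 := hpp
  rw [qbr_expand, qbr_expand, qbr_expand, qbr_expand, qbr_expand, qbr_expand, qbr_expand,
    e1, e2, e3, e4, e5, e6, e7]
  rw [qbr_expand, e3] at h1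
  rw [qbr_expand, e6] at h2
  exact key _ _ _ _ _ hp hA hB hC hD hden
    (div_ne_zero_iff.mp h1).1 (div_ne_zero_iff.mp h2).1
end

section
/- Let h be a complex number with exp(h) ≠ 1 and set [x] = (exp(hx/2) − exp(−hx/2))/(exp(h/2) − exp(−h/2)) for x ∈ ℂ. For all complex numbers a, b, c, d such that [c−b−1], [c−b+1], [b−c−1], [b−c+1] are all nonzero, one has [a−b][c−d−1]/[c−b−1] − [a−b+1][c−d]/[c−b+1] − [a−c][b−d−1]/[b−c−1] + [a−c+1][b−d]/[b−c+1] = 0. (Vanishing of the coefficient 𝒜_{l,m,j,s} in (A45), used to prove the Cartan relation [e_i, f_j] = 0 for i ≠ j.) -/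
set_option maxHeartbeats 2000000


/-- Vanishing of the coefficient in (A45). -/
theorem identity_A45 (h : ℂ) (hh : Complex.exp h ≠ 1) (a b c d : ℂ)
    (h1 : qbr h (c - b - 1) ≠ 0) (h2 : qbr h (c - b + 1) ≠ 0)
    (h3 : qbr h (b - c - 1) ≠ 0) (h4 : qbr h (b - c + 1) ≠ 0) :
    qbr h (a - b) * qbr h (c - d - 1) / qbr h (c - b - 1)
      - qbr h (a - b + 1) * qbr h (c - d) / qbr h (c - b + 1)
      - qbr h (a - c) * qbr h (b - d - 1) / qbr h (b - c - 1)
      + qbr h (a - c + 1) * qbr h (b - d) / qbr h (b - c + 1) = 0 := by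
  have hQ : Complex.exp (h / 2) - Complex.exp (-h / 2) ≠ 0 := by
    rw [sub_ne_zero]
    intro e
    apply hh
    have : Complex.exp h = Complex.exp (h / 2) * Complex.exp (h / 2) := by
      rw [← Complex.exp_add]; ring_nf
    rw [this]
    nth_rewrite 2 [e]
    rw [← Complex.exp_add]
    have h0 : h / 2 + -h / 2 = 0 := by ring
    rw [h0, Complex.exp_zero]
  -- numerator nonzeroness
  have num_ne : ∀ x : ℂ, qbr h x ≠ 0 →
      Complex.exp (h * x / 2) - Complex.exp (-(h * x) / 2) ≠ 0 := by
    intro x hx hnum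
    exact hx (by rw [qbr, hnum, zero_div])
  have H1 := num_ne _ h1
  have H2 := num_ne _ h2
  have H3 := num_ne _ h3
  have H4 := num_ne _ h4
  have key : ∀ x : ℂ, Complex.exp (-(h * x) / 2) = (Complex.exp (h * x / 2))⁻¹ := by
    intro x
    rw [← Complex.exp_neg]; ring_nf
  have split : ∀ x y : ℂ, Complex.exp (h * (x - y) / 2)
      = Complex.exp (h * x / 2) * (Complex.exp (h * y / 2))⁻¹ := by
    intro x y
    rw [← Complex.exp_neg, ← Complex.exp_add]; ring_nf
  have eA := Complex.exp_ne_zero (h * a / 2)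
  have eB := Complex.exp_ne_zero (h * b / 2)
  have eC := Complex.exp_ne_zero (h * c / 2)
  have eD := Complex.exp_ne_zero (h * d / 2)
  have eQ := Complex.exp_ne_zero (h / 2)
  have hone : Complex.exp (h * 1 / 2) = Complex.exp (h / 2) := by ring_nf
  have rw1 : ∀ x y : ℂ, Complex.exp (h * (x - y - 1) / 2)
      = Complex.exp (h * x / 2) * (Complex.exp (h * y / 2))⁻¹ * (Complex.exp (h / 2))⁻¹ := by
    intro x y
    have : x - y - 1 = (x - y) - 1 := by ring
    rw [this, split, split, hone]
  have rw2 : ∀ x y : ℂ, Complex.exp (h * (x - y + 1) / 2)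
      = Complex.exp (h * x / 2) * (Complex.exp (h * y / 2))⁻¹ * Complex.exp (h / 2) := by
    intro x y
    have : h * (x - y + 1) / 2 = h * (x - y) / 2 + h / 2 := by ring
    rw [this, Complex.exp_add, split]
  have keyQ : Complex.exp (-h / 2) = (Complex.exp (h / 2))⁻¹ := by
    rw [← Complex.exp_neg]; ring_nf
  simp only [qbr, key, split, rw1, rw2, hone, keyQ] at H1 H2 H3 H4 hQ ⊢
  set A := Complex.exp (h * a / 2) with hA
  set B := Complex.exp (h * b / 2) with hB
  set C := Complex.exp (h * c / 2) with hC
  set D := Complex.exp (h * d / 2) with hD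
  set Q := Complex.exp (h / 2) with hQdef
  clear_value A B C D Q
  have hW1 := div_ne_zero H1 hQ
  have hW2 := div_ne_zero H2 hQ
  have hW3 := div_ne_zero H3 hQ
  have hW4 := div_ne_zero H4 hQ
  rw [div_sub_div _ _ hW1 hW2, div_sub_div _ _ (mul_ne_zero hW1 hW2) hW3,
    div_add_div _ _ (mul_ne_zero (mul_ne_zero hW1 hW2) hW3) hW4, div_eq_zero_iff]
  left
  set S := Q - Q⁻¹ with hS
  clear_value S
  clear hS hA hB hC hD hQdef hone rw1 rw2 key split keyQ num_ne h1 h2 h3 h4 hh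
  clear H1 H2 H3 H4 hW1 hW2 hW3 hW4 a b c d h
  have key2 :
      ((A * B⁻¹ - (A * B⁻¹)⁻¹) / S * ((C * D⁻¹ * Q⁻¹ - (C * D⁻¹ * Q⁻¹)⁻¹) / S) *
          ((C * B⁻¹ * Q - (C * B⁻¹ * Q)⁻¹) / S) -
        (A * B⁻¹ * Q - (A * B⁻¹ * Q)⁻¹) / S * ((C * D⁻¹ - (C * D⁻¹)⁻¹) / S) *
          ((C * B⁻¹ * Q⁻¹ - (C * B⁻¹ * Q⁻¹)⁻¹) / S)) *
          ((B * C⁻¹ * Q⁻¹ - (B * C⁻¹ * Q⁻¹)⁻¹) / S) *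
          ((B * C⁻¹ * Q - (B * C⁻¹ * Q)⁻¹) / S)
        - (A * C⁻¹ - (A * C⁻¹)⁻¹) / S * ((B * D⁻¹ * Q⁻¹ - (B * D⁻¹ * Q⁻¹)⁻¹) / S) *
            ((C * B⁻¹ * Q⁻¹ - (C * B⁻¹ * Q⁻¹)⁻¹) / S * ((C * B⁻¹ * Q - (C * B⁻¹ * Q)⁻¹) / S)) *
            ((B * C⁻¹ * Q - (B * C⁻¹ * Q)⁻¹) / S)
        + (A * C⁻¹ * Q - (A * C⁻¹ * Q)⁻¹) / S * ((B * D⁻¹ - (B * D⁻¹)⁻¹) / S) *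
            ((C * B⁻¹ * Q⁻¹ - (C * B⁻¹ * Q⁻¹)⁻¹) / S * ((C * B⁻¹ * Q - (C * B⁻¹ * Q)⁻¹) / S) *
              ((B * C⁻¹ * Q⁻¹ - (B * C⁻¹ * Q⁻¹)⁻¹) / S)) = 0 := by
    field_simp
    ring
  linear_combination key2
end

section
/- Let h be a complex number with exp(h) ≠ 1 and let [x] = (exp(hx/2) − exp(−hx/2))/(exp(h/2) − exp(−h/2)) for x ∈ ℂ. Let n ≥ 1 and let a₁, …, aₙ, b₁, …, b_{n−1}, c₁, …, c_{n−1} be complex numbers such that for all i ≠ t in {1, …, n} the brackets [a_i − a_t], [a_i − a_t − 1] and [a_i − a_t + 1] are nonzero. Then ∑_{s=0}^{1} ∑_{i=1}^{n} (−1)^s · ( ∏_{t=1}^{n−1} [a_i − b_t − s] · ∏_{t=1}^{n−1} [a_i − c_t − s] ) / ( ∏_{t≠i} [a_i − a_t − s][a_i − a_t − s + 1] ) = 0. (Identity (A26), the common generic form of the identities (24a)–(24d).) -/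
open Polynomial Finset

lemma qbr_formula (h x y : ℂ) :
    qbr h (x - y) = (Complex.exp (h*x) - Complex.exp (h*y)) /
      (Complex.exp (h*(x+y)/2) * (Complex.exp (h/2) - Complex.exp (-h/2))) := by
  rcases eq_or_ne (Complex.exp (h/2) - Complex.exp (-h/2)) 0 with hD | hD
  · simp [qbr, hD]
  · unfold qbr
    have E1 : Complex.exp (h*(x-y)/2) = Complex.exp (h*x/2) * (Complex.exp (h*y/2))⁻¹ := by
      rw [← Complex.exp_neg, ← Complex.exp_add]; congr 1; ring
    have E2 : Complex.exp (-(h*(x-y))/2) = Complex.exp (h*y/2) * (Complex.exp (h*x/2))⁻¹ := by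
      rw [← Complex.exp_neg, ← Complex.exp_add]; congr 1; ring
    have E3 : Complex.exp (h*x) = Complex.exp (h*x/2) * Complex.exp (h*x/2) := by
      rw [← Complex.exp_add]; congr 1; ring
    have E4 : Complex.exp (h*y) = Complex.exp (h*y/2) * Complex.exp (h*y/2) := by
      rw [← Complex.exp_add]; congr 1; ring
    have E5 : Complex.exp (h*(x+y)/2) = Complex.exp (h*x/2) * Complex.exp (h*y/2) := by
      rw [← Complex.exp_add]; congr 1; ring
    rw [E1, E2, E3, E4, E5]
    have h1 := Complex.exp_ne_zero (h*x/2)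
    have h2 := Complex.exp_ne_zero (h*y/2)
    rw [div_eq_div_iff hD (mul_ne_zero (mul_ne_zero h1 h2) hD)]
    field_simp

lemma D_ne (h : ℂ) (hh : Complex.exp h ≠ 1) :
    Complex.exp (h/2) - Complex.exp (-h/2) ≠ 0 := by
  intro e
  apply hh
  have h1 : Complex.exp (h/2) = Complex.exp (-h/2) := sub_eq_zero.mp e
  have h2 : Complex.exp h = Complex.exp (h/2) / Complex.exp (-h/2) := by
    rw [← Complex.exp_sub]; congr 1; ring
  rw [h2, h1, div_self (Complex.exp_ne_zero _)]

lemma qbr_exp_ne_one (h : ℂ) (hh : Complex.exp h ≠ 1) (x : ℂ) (hq : qbr h x ≠ 0) :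
    Complex.exp (h*x) ≠ 1 := by
  intro e
  apply hq
  have := qbr_formula h x 0
  rw [sub_zero] at this
  rw [this, e]
  simp

lemma erase_prod_eq {M : Type*} [CommMonoid M] {n s i : ℕ} (hs : s < 2)
    (hi : i ∈ Finset.Icc 1 n) (g : ℕ × ℕ → M) :
    ∏ k ∈ (Finset.range 2 ×ˢ Finset.Icc 1 n).erase (s, i), g k
      = g (1 - s, i) * ∏ t ∈ (Finset.Icc 1 n).erase i, (g (0, t) * g (1, t)) := by
  have hi' := Finset.mem_Icc.mp hi
  have hset : (Finset.range 2 ×ˢ Finset.Icc 1 n).erase (s, i)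
      = insert (1 - s, i) (Finset.range 2 ×ˢ (Finset.Icc 1 n).erase i) := by
    ext ⟨σ, t⟩
    simp only [Finset.mem_erase, Finset.mem_product, Finset.mem_range, Finset.mem_insert,
      Finset.mem_Icc, Prod.mk.injEq, ne_eq]
    omega
  rw [hset, Finset.prod_insert (by simp), Finset.prod_product,
    Finset.prod_range_succ, Finset.prod_range_one, ← Finset.prod_mul_distrib]

lemma lagrange_sum_zero {ι : Type*} [DecidableEq ι] (S : Finset ι) (v : ι → ℂ)
    (hv : Set.InjOn v S) (F : Polynomial ℂ)
    (hdeg : F.degree < ((S.card - 1 : ℕ) : WithBot ℕ)) :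
    ∑ j ∈ S, F.eval (v j) / ∏ k ∈ S.erase j, (v j - v k) = 0 := by
  have hF : F.degree < (S.card : WithBot ℕ) :=
    lt_of_lt_of_le hdeg (by exact_mod_cast Nat.sub_le _ _)
  have key := Lagrange.eq_interpolate hv hF
  have h0 : F.coeff (S.card - 1) = 0 := Polynomial.coeff_eq_zero_of_degree_lt hdeg
  rw [key, Lagrange.interpolate_apply, Polynomial.finset_sum_coeff] at h0
  rw [← h0]
  refine Finset.sum_congr rfl fun j hj => ?_
  rw [Polynomial.coeff_C_mul, Lagrange.basis]
  have hbd : ∀ k ∈ S.erase j, Lagrange.basisDivisor (v j) (v k)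
      = Polynomial.C ((v j - v k)⁻¹) * (X - Polynomial.C (v k)) := fun k hk => rfl
  rw [Finset.prod_congr rfl hbd, Finset.prod_mul_distrib, ← map_prod]
  have hmon : (∏ k ∈ S.erase j, (X - Polynomial.C (v k))).Monic :=
    monic_prod_of_monic _ _ fun k _ => monic_X_sub_C _
  have hnd : (∏ k ∈ S.erase j, (X - Polynomial.C (v k))).natDegree = S.card - 1 := by
    rw [Polynomial.natDegree_prod _ _ (fun k _ => X_sub_C_ne_zero _)]
    simp [Finset.card_erase_of_mem hj]
  rw [Polynomial.coeff_C_mul, ← hnd, hmon.coeff_natDegree, mul_one,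
    div_eq_mul_inv, ← Finset.prod_inv_distrib]

noncomputable def pts (h : ℂ) (a : ℕ → ℂ) (si : ℕ × ℕ) : ℂ :=
  Complex.exp (h * (a si.2 - (si.1 : ℂ)))

lemma pts_mk (h : ℂ) (a : ℕ → ℂ) (s i : ℕ) :
    pts h a (s, i) = Complex.exp (h * (a i - (s : ℂ))) := rfl

/-- Identity (A26). -/
theorem identity_A26 (h : ℂ) (hh : Complex.exp h ≠ 1) (n : ℕ) (hn : 1 ≤ n)
    (a b c : ℕ → ℂ)
    (hA : ∀ i ∈ Finset.Icc 1 n, ∀ t ∈ Finset.Icc 1 n, i ≠ t →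
      qbr h (a i - a t) ≠ 0 ∧ qbr h (a i - a t - 1) ≠ 0 ∧ qbr h (a i - a t + 1) ≠ 0) :
    ∑ s ∈ Finset.range 2, ∑ i ∈ Finset.Icc 1 n, (-1 : ℂ) ^ s *
      ((∏ t ∈ Finset.Icc 1 (n - 1), qbr h (a i - b t - (s : ℂ))) *
        ∏ t ∈ Finset.Icc 1 (n - 1), qbr h (a i - c t - (s : ℂ))) /
      ∏ t ∈ (Finset.Icc 1 n).erase i,
        qbr h (a i - a t - (s : ℂ)) * qbr h (a i - a t - (s : ℂ) + 1) = 0 := by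
  classical
  have hD : Complex.exp (h/2) - Complex.exp (-h/2) ≠ 0 := D_ne h hh
  set S : Finset (ℕ × ℕ) := Finset.range 2 ×ˢ Finset.Icc 1 n with hSdef
  -- injectivity of the nodes
  have hinj : Set.InjOn (pts h a) S := by
    rintro ⟨s, i⟩ hsi ⟨σ, t⟩ hσt heq
    have hsi' := Finset.mem_product.mp (Finset.mem_coe.mp hsi)
    have hσt' := Finset.mem_product.mp (Finset.mem_coe.mp hσt)
    have hs2 : s < 2 := Finset.mem_range.mp hsi'.1
    have hσ2 : σ < 2 := Finset.mem_range.mp hσt'.1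
    have hii := hsi'.2
    have htt := hσt'.2
    rw [pts_mk, pts_mk] at heq
    have key : Complex.exp (h * ((a i - (s:ℂ)) - (a t - (σ:ℂ)))) = 1 := by
      rw [show h * ((a i - (s:ℂ)) - (a t - (σ:ℂ)))
          = h * (a i - (s:ℂ)) - h * (a t - (σ:ℂ)) by ring,
        Complex.exp_sub, heq, div_self (Complex.exp_ne_zero _)]
    by_cases hit : i = t
    · subst hit
      have hsσ : s = σ := by
        interval_cases s <;> interval_cases σ
        · rfl
        · exact absurd (by convert key using 2; push_cast; ring : Complex.exp h = 1) hh
        · exfalso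
          have : Complex.exp (-h) = 1 := by convert key using 2; push_cast; ring
          rw [Complex.exp_neg, inv_eq_one] at this
          exact hh this
        · rfl
      rw [hsσ]
    · exfalso
      obtain ⟨h1, h2, h3⟩ := hA i hii t htt hit
      have n1 := qbr_exp_ne_one h hh _ h1
      have n2 := qbr_exp_ne_one h hh _ h2
      have n3 := qbr_exp_ne_one h hh _ h3
      interval_cases s <;> interval_cases σ
      · exact n1 (by convert key using 2; push_cast; ring)
      · exact n3 (by convert key using 2; push_cast; ring)
      · exact n2 (by convert key using 2; push_cast; ring)
      · exact n1 (by convert key using 2; push_cast; ring)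
  have hneq : ∀ j ∈ S, ∀ k ∈ S, j ≠ k → pts h a j - pts h a k ≠ 0 := by
    intro j hj k hk hjk
    exact sub_ne_zero.mpr fun e => hjk (hinj (Finset.mem_coe.mpr hj) (Finset.mem_coe.mpr hk) e)
  set F : Polynomial ℂ := ∏ t ∈ Finset.Icc 1 (n-1),
      ((Polynomial.X - Polynomial.C (Complex.exp (h * b t))) *
        (Polynomial.X - Polynomial.C (Complex.exp (h * c t)))) with hFdef
  have hcard1 : (Finset.Icc 1 n).card = n := by simp
  have hcard2 : (Finset.Icc 1 (n-1)).card = n - 1 := by simp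
  have hScard : S.card = 2 * n := by
    rw [hSdef, Finset.card_product, Finset.card_range, hcard1]
  have hFdeg : F.degree < ((S.card - 1 : ℕ) : WithBot ℕ) := by
    have h1 : F.natDegree ≤ 2 * (n-1) := by
      calc F.natDegree ≤ ∑ t ∈ Finset.Icc 1 (n-1),
            ((Polynomial.X - Polynomial.C (Complex.exp (h * b t))) *
              (Polynomial.X - Polynomial.C (Complex.exp (h * c t)))).natDegree :=
            Polynomial.natDegree_prod_le _ _
        _ ≤ (Finset.Icc 1 (n-1)).card • 2 := Finset.sum_le_card_nsmul _ _ 2 (fun t _ =>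
            le_trans (Polynomial.natDegree_mul_le) (by simp [Polynomial.natDegree_X_sub_C]))
        _ = 2 * (n-1) := by rw [hcard2, smul_eq_mul]; ring
    refine lt_of_le_of_lt Polynomial.degree_le_natDegree ?_
    rw [hScard]
    exact_mod_cast (by omega : F.natDegree < 2 * n - 1)
  have hlag := lagrange_sum_zero S (pts h a) hinj F hFdeg
  set K : ℂ := Complex.exp (-h/2)^(n-1) * (1 - Complex.exp (-h)) *
      (∏ t ∈ Finset.Icc 1 n, Complex.exp (h * a t)) /
      (∏ t ∈ Finset.Icc 1 (n-1), (Complex.exp (h * b t / 2) * Complex.exp (h * c t / 2)))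
      with hKdef
  have hWprod : (∏ t ∈ Finset.Icc 1 (n-1),
      (Complex.exp (h * b t / 2) * Complex.exp (h * c t / 2))) ≠ 0 :=
    Finset.prod_ne_zero_iff.mpr fun t _ =>
      mul_ne_zero (Complex.exp_ne_zero _) (Complex.exp_ne_zero _)
  have hK : K * (∏ t ∈ Finset.Icc 1 (n-1),
      (Complex.exp (h * b t / 2) * Complex.exp (h * c t / 2)))
      = Complex.exp (-h/2)^(n-1) * (1 - Complex.exp (-h)) *
        ∏ t ∈ Finset.Icc 1 n, Complex.exp (h * a t) := div_mul_cancel₀ _ hWprod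
  have main : ∀ s ∈ Finset.range 2, ∀ i ∈ Finset.Icc 1 n,
      (-1 : ℂ) ^ s *
      ((∏ t ∈ Finset.Icc 1 (n - 1), qbr h (a i - b t - (s : ℂ))) *
        ∏ t ∈ Finset.Icc 1 (n - 1), qbr h (a i - c t - (s : ℂ))) /
      ∏ t ∈ (Finset.Icc 1 n).erase i,
        (qbr h (a i - a t - (s : ℂ)) * qbr h (a i - a t - (s : ℂ) + 1))
      = K * F.eval (pts h a (s, i)) / ∏ k ∈ S.erase (s, i), (pts h a (s, i) - pts h a k) := by
    intro s hs i hi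
    have hs2 : s < 2 := Finset.mem_range.mp hs
    have hb : ∀ t ∈ Finset.Icc 1 (n-1), qbr h (a i - b t - (s:ℂ))
        = (Complex.exp (h * (a i - (s:ℂ))) - Complex.exp (h * b t)) /
          (Complex.exp (h * ((a i - (s:ℂ)) + b t)/2) *
            (Complex.exp (h/2) - Complex.exp (-h/2))) := by
      intro t _
      rw [show a i - b t - (s:ℂ) = (a i - (s:ℂ)) - b t by ring, qbr_formula]
    have hcc : ∀ t ∈ Finset.Icc 1 (n-1), qbr h (a i - c t - (s:ℂ))
        = (Complex.exp (h * (a i - (s:ℂ))) - Complex.exp (h * c t)) /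
          (Complex.exp (h * ((a i - (s:ℂ)) + c t)/2) *
            (Complex.exp (h/2) - Complex.exp (-h/2))) := by
      intro t _
      rw [show a i - c t - (s:ℂ) = (a i - (s:ℂ)) - c t by ring, qbr_formula]
    have hd : ∀ t ∈ (Finset.Icc 1 n).erase i,
        qbr h (a i - a t - (s:ℂ)) * qbr h (a i - a t - (s:ℂ) + 1)
        = ((Complex.exp (h * (a i - (s:ℂ))) - Complex.exp (h * a t)) *
            (Complex.exp (h * (a i - (s:ℂ))) - Complex.exp (h * (a t - 1)))) /
          ((Complex.exp (h * ((a i - (s:ℂ)) + a t)/2) *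
              (Complex.exp (h/2) - Complex.exp (-h/2))) *
            (Complex.exp (h * ((a i - (s:ℂ)) + (a t - 1))/2) *
              (Complex.exp (h/2) - Complex.exp (-h/2)))) := by
      intro t _
      rw [show a i - a t - (s:ℂ) = (a i - (s:ℂ)) - a t by ring]
      rw [show a i - (s:ℂ) - a t + 1 = (a i - (s:ℂ)) - (a t - 1) by ring]
      rw [qbr_formula, qbr_formula, div_mul_div_comm]
    have hmemS : ∀ σ t, σ < 2 → t ∈ Finset.Icc 1 n → (σ, t) ∈ S := fun σ t h1 h2 =>
      Finset.mem_product.mpr ⟨Finset.mem_range.mpr h1, h2⟩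
    have hdiff : ∀ σ, σ < 2 → ∀ t, t ∈ Finset.Icc 1 n → (σ, t) ≠ (s, i) →
        Complex.exp (h * (a i - (s:ℂ))) - Complex.exp (h * (a t - (σ:ℂ))) ≠ 0 := by
      intro σ hσ t ht hne
      have := hneq (s,i) (hmemS s i hs2 hi) (σ,t) (hmemS σ t hσ ht) (Ne.symm hne)
      simpa only [pts_mk] using this
    have hFeval : F.eval (pts h a (s, i))
        = (∏ t ∈ Finset.Icc 1 (n-1),
            (Complex.exp (h * (a i - (s:ℂ))) - Complex.exp (h * b t))) *
          ∏ t ∈ Finset.Icc 1 (n-1),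
            (Complex.exp (h * (a i - (s:ℂ))) - Complex.exp (h * c t)) := by
      rw [hFdef, pts_mk, Polynomial.eval_prod]
      simp only [Polynomial.eval_mul, Polynomial.eval_sub, Polynomial.eval_X, Polynomial.eval_C]
      rw [Finset.prod_mul_distrib]
    have hbig : ∏ k ∈ S.erase (s, i), (pts h a (s, i) - pts h a k)
        = (Complex.exp (h * (a i - (s:ℂ))) - Complex.exp (h * (a i - ((1-s:ℕ):ℂ)))) *
          ∏ t ∈ (Finset.Icc 1 n).erase i,
            ((Complex.exp (h * (a i - (s:ℂ))) - Complex.exp (h * a t)) *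
              (Complex.exp (h * (a i - (s:ℂ))) - Complex.exp (h * (a t - 1)))) := by
      rw [hSdef, erase_prod_eq hs2 hi (fun k => pts h a (s, i) - pts h a k)]
      simp only [pts_mk]
      refine congrArg₂ _ rfl (Finset.prod_congr rfl fun t ht => ?_)
      simp only [Nat.cast_zero, Nat.cast_one, sub_zero]
    have hsW : (-1:ℂ)^s * (Complex.exp (h * (a i - (s:ℂ)))
          - Complex.exp (h * (a i - ((1-s:ℕ):ℂ))))
        = Complex.exp (h * a i) * (1 - Complex.exp (-h)) := by
      have hEa : Complex.exp (h * (a i - 1)) = Complex.exp (h * a i) * Complex.exp (-h) := by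
        rw [← Complex.exp_add]; congr 1; ring
      interval_cases s
      · simp only [Nat.sub_zero, Nat.cast_one, Nat.cast_zero, sub_zero, pow_zero, one_mul]
        rw [hEa]; ring
      · simp only [Nat.sub_self, Nat.cast_zero, Nat.cast_one, sub_zero, pow_one]
        rw [hEa]; ring
    rw [Finset.prod_congr rfl hb, Finset.prod_congr rfl hcc, Finset.prod_congr rfl hd,
      Finset.prod_div_distrib, Finset.prod_div_distrib, Finset.prod_div_distrib, hFeval, hbig]
    set P : ℂ := Complex.exp (h * (a i - (s:ℂ))) with hP
    set DD : ℂ := Complex.exp (h/2) - Complex.exp (-h/2) with hDD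
    set Pb : ℂ := ∏ t ∈ Finset.Icc 1 (n-1), (P - Complex.exp (h * b t)) with hPbd
    set Pc : ℂ := ∏ t ∈ Finset.Icc 1 (n-1), (P - Complex.exp (h * c t)) with hPcd
    set JB : ℂ := ∏ t ∈ Finset.Icc 1 (n-1),
      (Complex.exp (h * ((a i - (s:ℂ)) + b t)/2) * DD) with hJBd
    set JC : ℂ := ∏ t ∈ Finset.Icc 1 (n-1),
      (Complex.exp (h * ((a i - (s:ℂ)) + c t)/2) * DD) with hJCd
    set PD : ℂ := ∏ t ∈ (Finset.Icc 1 n).erase i,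
      ((P - Complex.exp (h * a t)) * (P - Complex.exp (h * (a t - 1)))) with hPDd
    set JD : ℂ := ∏ t ∈ (Finset.Icc 1 n).erase i,
      ((Complex.exp (h * ((a i - (s:ℂ)) + a t)/2) * DD) *
        (Complex.exp (h * ((a i - (s:ℂ)) + (a t - 1))/2) * DD)) with hJDd
    set W : ℂ := P - Complex.exp (h * (a i - ((1-s:ℕ):ℂ))) with hWd
    have hJB0 : JB ≠ 0 := by
      rw [hJBd]
      exact Finset.prod_ne_zero_iff.mpr fun t _ => mul_ne_zero (Complex.exp_ne_zero _) hD
    have hJC0 : JC ≠ 0 := by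
      rw [hJCd]
      exact Finset.prod_ne_zero_iff.mpr fun t _ => mul_ne_zero (Complex.exp_ne_zero _) hD
    have hPD0 : PD ≠ 0 := by
      rw [hPDd]
      refine Finset.prod_ne_zero_iff.mpr fun t ht => ?_
      have ht' := Finset.mem_erase.mp ht
      have d0 := hdiff 0 (by omega) t ht'.2
        (by simp only [ne_eq, Prod.mk.injEq, not_and]; exact fun _ => ht'.1)
      have d1 := hdiff 1 (by omega) t ht'.2
        (by simp only [ne_eq, Prod.mk.injEq, not_and]; exact fun _ => ht'.1)
      refine mul_ne_zero ?_ ?_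
      · simpa only [Nat.cast_zero, sub_zero] using d0
      · simpa only [Nat.cast_one] using d1
    have hW0 : W ≠ 0 := by
      rw [hWd]
      exact hdiff (1-s) (by omega) i hi
        (by simp only [ne_eq, Prod.mk.injEq, not_and]; intro h12; omega)
    have hJBJC : JB * JC = (P * DD^2)^(n-1) *
        ∏ t ∈ Finset.Icc 1 (n-1), (Complex.exp (h * b t/2) * Complex.exp (h * c t/2)) := by
      rw [hJBd, hJCd, ← Finset.prod_mul_distrib]
      calc ∏ t ∈ Finset.Icc 1 (n-1),
            ((Complex.exp (h * ((a i - (s:ℂ)) + b t)/2) * DD) *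
              (Complex.exp (h * ((a i - (s:ℂ)) + c t)/2) * DD))
          = ∏ t ∈ Finset.Icc 1 (n-1),
            ((P * DD^2) * (Complex.exp (h * b t/2) * Complex.exp (h * c t/2))) :=
            Finset.prod_congr rfl fun t _ => by
              have comb : Complex.exp (h * ((a i - (s:ℂ)) + b t)/2) *
                  Complex.exp (h * ((a i - (s:ℂ)) + c t)/2)
                  = P * (Complex.exp (h * b t/2) * Complex.exp (h * c t/2)) := by
                rw [hP, ← Complex.exp_add, ← Complex.exp_add, ← Complex.exp_add]
                congr 1; ring
              linear_combination DD^2 * comb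
        _ = (P * DD^2)^(n-1) *
            ∏ t ∈ Finset.Icc 1 (n-1), (Complex.exp (h * b t/2) * Complex.exp (h * c t/2)) := by
            rw [Finset.prod_mul_distrib, Finset.prod_const, hcard2]
    have hJD2 : JD = (P * DD^2)^(n-1) * (Complex.exp (-h/2)^(n-1) *
        ∏ t ∈ (Finset.Icc 1 n).erase i, Complex.exp (h * a t)) := by
      rw [hJDd]
      calc ∏ t ∈ (Finset.Icc 1 n).erase i,
            ((Complex.exp (h * ((a i - (s:ℂ)) + a t)/2) * DD) *
              (Complex.exp (h * ((a i - (s:ℂ)) + (a t - 1))/2) * DD))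
          = ∏ t ∈ (Finset.Icc 1 n).erase i,
            ((P * DD^2) * (Complex.exp (-h/2) * Complex.exp (h * a t))) :=
            Finset.prod_congr rfl fun t _ => by
              have comb : Complex.exp (h * ((a i - (s:ℂ)) + a t)/2) *
                  Complex.exp (h * ((a i - (s:ℂ)) + (a t - 1))/2)
                  = P * (Complex.exp (-h/2) * Complex.exp (h * a t)) := by
                rw [hP, ← Complex.exp_add, ← Complex.exp_add, ← Complex.exp_add]
                congr 1; ring
              linear_combination DD^2 * comb
        _ = (P * DD^2)^(n-1) * (Complex.exp (-h/2)^(n-1) *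
            ∏ t ∈ (Finset.Icc 1 n).erase i, Complex.exp (h * a t)) := by
            simp only [Finset.prod_mul_distrib, Finset.prod_const,
              Finset.card_erase_of_mem hi, hcard1, mul_pow]
    have hprodA : (∏ t ∈ (Finset.Icc 1 n).erase i, Complex.exp (h * a t)) *
        Complex.exp (h * a i) = ∏ t ∈ Finset.Icc 1 n, Complex.exp (h * a t) :=
      Finset.prod_erase_mul _ _ hi
    have hkey : (-1:ℂ)^s * JD * W = K * (JB * JC) := by
      rw [hJD2, hJBJC, hWd]
      linear_combination ((P * DD^2)^(n-1) * (Complex.exp (-h/2))^(n-1) *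
          (∏ t ∈ (Finset.Icc 1 n).erase i, Complex.exp (h * a t))) * hsW
        + ((P * DD^2)^(n-1) * (Complex.exp (-h/2))^(n-1) * (1 - Complex.exp (-h))) * hprodA
        + (-(P * DD^2)^(n-1)) * hK
    rw [div_mul_div_comm, div_div_eq_mul_div, div_eq_div_iff hPD0 (mul_ne_zero hW0 hPD0)]
    have expand : (-1:ℂ)^s * (Pb * Pc / (JB * JC)) * JD * (W * PD)
        = ((Pb * Pc) * PD * ((-1:ℂ)^s * JD * W)) / (JB * JC) := by ring
    rw [expand, hkey]
    field_simp
  calc ∑ s ∈ Finset.range 2, ∑ i ∈ Finset.Icc 1 n, (-1 : ℂ) ^ s *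
      ((∏ t ∈ Finset.Icc 1 (n - 1), qbr h (a i - b t - (s : ℂ))) *
        ∏ t ∈ Finset.Icc 1 (n - 1), qbr h (a i - c t - (s : ℂ))) /
      ∏ t ∈ (Finset.Icc 1 n).erase i,
        qbr h (a i - a t - (s : ℂ)) * qbr h (a i - a t - (s : ℂ) + 1)
      = ∑ s ∈ Finset.range 2, ∑ i ∈ Finset.Icc 1 n,
          K * F.eval (pts h a (s, i)) / ∏ k ∈ S.erase (s, i), (pts h a (s, i) - pts h a k) :=
        Finset.sum_congr rfl fun s hs => Finset.sum_congr rfl fun i hi => main s hs i hi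
    _ = ∑ j ∈ S, K * F.eval (pts h a j) / ∏ k ∈ S.erase j, (pts h a j - pts h a k) := by
        rw [hSdef, Finset.sum_product]
    _ = K * ∑ j ∈ S, F.eval (pts h a j) / ∏ k ∈ S.erase j, (pts h a j - pts h a k) := by
        rw [Finset.mul_sum]
        exact Finset.sum_congr rfl fun j _ => (mul_div_assoc _ _ _)
    _ = 0 := by rw [hlag, mul_zero]
end

section
/- Let h be a complex number with exp(h) ≠ 1 and let [x] = (exp(hx/2) − exp(−hx/2))/(exp(h/2) − exp(−h/2)) for x ∈ ℂ. Let k ≥ 1 be an integer, fix two distinct indices j, m in the integer interval [1−k, k−1], and let complex numbers L_{i,2k+1} (i ∈ [−k, k]), L_{l,2k} (l ∈ [−k, k−1]) and L_{i,2k−1} (i ∈ [1−k, k−1], i ≠ j, i ≠ m) be given such that [L_{i,2k} − L_{l,2k} + s] ≠ 0 and [L_{i,2k} − L_{l,2k} + s − 1] ≠ 0 for all i ≠ l in [−k, k−1] and s ∈ {0, 1}. Then ∑_{s=0}^{1} ∑_{l=−k}^{k−1} (−1)^s · ( ∏_{i=−k}^{k} [L_{i,2k+1} − L_{l,2k} +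 s] · ∏_{i=1−k, i≠j,m}^{k−1} [L_{i,2k−1} − L_{l,2k} + s] ) / ( ∏_{i≠l, i=−k}^{k−1} [L_{i,2k} − L_{l,2k} + s][L_{i,2k} − L_{l,2k} + s − 1] ) = 0. (Identity (24a).) -/
open Polynomial in
private lemma aux_lagrange_sum {ι : Type*} [DecidableEq ι] (s : Finset ι) (v : ι → ℂ)
    (hvs : Set.InjOn v s) (P : ℂ[X]) (hP : P.degree < ((s.card - 1 : ℕ) : WithBot ℕ)) :
    ∑ i ∈ s, P.eval (v i) * ∏ j ∈ s.erase i, (v i - v j)⁻¹ = 0 := by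
  have hPs : P.degree < (s.card : ℕ) :=
    hP.trans_le (by exact_mod_cast Nat.sub_le _ _)
  have hint : P = Lagrange.interpolate s v (fun i => P.eval (v i)) :=
    Lagrange.eq_interpolate hvs hPs
  have hc : P.coeff (s.card - 1) = 0 := coeff_eq_zero_of_degree_lt hP
  rw [hint, Lagrange.interpolate_apply, finset_sum_coeff] at hc
  rw [← hc]
  apply Finset.sum_congr rfl
  intro i hi
  rw [coeff_C_mul]
  congr 1
  have hdeg : (Lagrange.basis s v i).natDegree = s.card - 1 := Lagrange.natDegree_basis hvs hi
  rw [← hdeg, ← leadingCoeff, Lagrange.basis, leadingCoeff_prod]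
  refine Finset.prod_congr rfl fun j hj => ?_
  rw [Lagrange.basisDivisor, leadingCoeff_mul, leadingCoeff_C, leadingCoeff_X_sub_C, mul_one]

private lemma combine_aux (a1 a2 c1 c2 b1 b2 d1 d2 z : ℂ) (n1 n2 e : ℕ)
    (hn : n1 + n2 = 2 * e) (hz : z ≠ 0) (hb1 : b1 ≠ 0) (hb2 : b2 ≠ 0)
    (hc1 : c1 ≠ 0) (hc2 : c2 ≠ 0) :
    (a1 / (b1 * z ^ n1) * (a2 / (b2 * z ^ n2))) /
      (c1 / (d1 * z ^ e) * (c2 / (d2 * z ^ e))) =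
    a1 * a2 * (d1 * d2) / (b1 * b2 * (c1 * c2)) := by
  have h2 : z ^ n1 * z ^ n2 = z ^ e * z ^ e := by
    rw [← pow_add, ← pow_add, hn, two_mul]
  rw [div_mul_div_comm, div_mul_div_comm, mul_mul_mul_comm b1 _ b2,
    mul_mul_mul_comm d1 _ d2, h2]
  have hZ : z ^ e * z ^ e ≠ 0 := mul_ne_zero (pow_ne_zero _ hz) (pow_ne_zero _ hz)
  field_simp

private lemma final_aux (N B1 Bm B0a B0b fL fL1 f1 E wpv sgn : ℂ) (A : ℂ)
    (hpv : sgn * (wpv * f1) = (E - 1) * (fL * fL1))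
    (hB1 : B1 ≠ 0) (hBm : Bm ≠ 0)
    (hA0 : A ≠ 0) (hwpv : wpv ≠ 0) (hf1 : f1 ≠ 0) :
    sgn * (N * (B0a * B0b) / (B1 * Bm * A)) =
    (E - 1) * ((fL * B0a) * (fL1 * B0b)) / (f1 * (B1 * Bm)) * (N * (wpv * A)⁻¹) := by
  field_simp
  linear_combination (N * B0a * B0b) * hpv

/-- Identity (24a).  `L1 i` stands for `L_{i,2k+1}`, `L0 l` for `L_{l,2k}` and
`Lm i` for `L_{i,2k-1}`. -/
theorem identity_24a (h : ℂ) (hh : Complex.exp h ≠ 1) (k : ℤ) (hk : 1 ≤ k)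
    (j m : ℤ) (hj : j ∈ Finset.Icc (1 - k) (k - 1)) (hm : m ∈ Finset.Icc (1 - k) (k - 1))
    (hjm : j ≠ m) (L1 L0 Lm : ℤ → ℂ)
    (hL0 : ∀ i ∈ Finset.Icc (-k) (k - 1), ∀ l ∈ Finset.Icc (-k) (k - 1), i ≠ l →
      ∀ s ∈ Finset.range 2,
        qbr h (L0 i - L0 l + (s : ℂ)) ≠ 0 ∧ qbr h (L0 i - L0 l + (s : ℂ) - 1) ≠ 0) :
    ∑ s ∈ Finset.range 2, ∑ l ∈ Finset.Icc (-k) (k - 1), (-1 : ℂ) ^ s *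
      ((∏ i ∈ Finset.Icc (-k) k, qbr h (L1 i - L0 l + (s : ℂ))) *
        ∏ i ∈ ((Finset.Icc (1 - k) (k - 1)).erase j).erase m, qbr h (Lm i - L0 l + (s : ℂ))) /
      ∏ i ∈ (Finset.Icc (-k) (k - 1)).erase l,
        qbr h (L0 i - L0 l + (s : ℂ)) * qbr h (L0 i - L0 l + (s : ℂ) - 1) = 0 := by
  classical
  have hk2 : (2:ℤ) ≤ k := by
    rcases Finset.mem_Icc.mp hj with ⟨hj1, hj2⟩
    rcases Finset.mem_Icc.mp hm with ⟨hm1, hm2⟩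
    omega
  set E := Complex.exp h with hE
  have hE0 : E ≠ 0 := Complex.exp_ne_zero h
  set F : ℂ → ℂ := fun y => Complex.exp (h * y / 2) with hFdef
  have hF0 : ∀ y, F y ≠ 0 := fun y => Complex.exp_ne_zero _
  have hFmul : ∀ a b : ℂ, F a * F b = F (a + b) := by
    intro a b
    simp only [hFdef, ← Complex.exp_add]
    congr 1; ring
  have hFE : ∀ a : ℂ, F a * F a = Complex.exp (h * a) := by
    intro a
    rw [hFmul]
    simp only [hFdef]
    congr 1; ring
  set D := F 1 - F (-1) with hDdef
  have hD : D ≠ 0 := by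
    intro hc
    apply hh
    have h1 : F 1 = F (-1) := sub_eq_zero.mp hc
    have h2 : F 1 * F 1 = F 1 * F (-1) := by rw [h1]
    rw [hFE 1, hFmul] at h2
    have h3 : F (1 + -1) = 1 := by
      simp only [hFdef]; norm_num [Complex.exp_zero]
    rw [h3] at h2
    rw [show h * 1 = h by ring] at h2
    exact h2
  have hq : ∀ A B : ℂ, qbr h (A - B) =
      (Complex.exp (h * A) - Complex.exp (h * B)) / (F A * (F B * D)) := by
    intro A B
    have e1 : Complex.exp (h * (A - B) / 2) = F A / F B := by
      rw [eq_div_iff (hF0 B)]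
      simp only [hFdef, ← Complex.exp_add]
      congr 1; ring
    have e2 : Complex.exp (-(h * (A - B)) / 2) = F B / F A := by
      rw [eq_div_iff (hF0 A)]
      simp only [hFdef, ← Complex.exp_add]
      congr 1; ring
    have e3 : Complex.exp (h / 2) = F 1 := by
      simp only [hFdef]; congr 1; ring
    have e4 : Complex.exp (-h / 2) = F (-1) := by
      simp only [hFdef]; congr 1; ring
    rw [qbr, e1, e2, e3, e4, ← hDdef]
    rw [div_sub_div _ _ (hF0 B) (hF0 A), hFE, hFE, div_div]
    congr 1; ring
  have hq1 : ∀ y : ℂ, qbr h y ≠ 0 → Complex.exp (h * y) ≠ 1 := by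
    intro y hy hexp
    apply hy
    have hee : Complex.exp (h * y / 2) = Complex.exp (-(h * y) / 2) := by
      rw [show h * y / 2 = -(h * y) / 2 + h * y by ring, Complex.exp_add, hexp, mul_one]
    rw [qbr, hee, sub_self, zero_div]
  have hprod : ∀ (T : Finset ℤ) (f : ℤ → ℂ) (x : ℂ),
      ∏ i ∈ T, qbr h (f i - x) =
        (∏ i ∈ T, (Complex.exp (h * x) - Complex.exp (h * f i))) /
          ((∏ i ∈ T, F (f i)) * (-(F x * D)) ^ T.card) := by
    intro T f x
    have step : ∀ i ∈ T, qbr h (f i - x) =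
        (Complex.exp (h * x) - Complex.exp (h * f i)) / (F (f i) * -(F x * D)) := by
      intro i _
      rw [hq, mul_neg, div_neg, ← neg_div, neg_sub]
    rw [Finset.prod_congr rfl step, Finset.prod_div_distrib, Finset.prod_mul_distrib,
      Finset.prod_const]
  -- index sets
  set I0 : Finset ℤ := Finset.Icc (-k) (k - 1) with hI0
  set I1 : Finset ℤ := Finset.Icc (-k) k with hI1
  set Im : Finset ℤ := ((Finset.Icc (1 - k) (k - 1)).erase j).erase m with hIm
  set S : Finset (ℤ × ℕ) := I0 ×ˢ Finset.range 2 with hS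
  set v : ℤ × ℕ → ℂ := fun p => Complex.exp (h * (L0 p.1 - (p.2 : ℂ))) with hv
  have hn0 : (I0.card : ℤ) = 2 * k := by
    rw [hI0, Int.card_Icc]; omega
  have hn1 : (I1.card : ℤ) = 2 * k + 1 := by
    rw [hI1, Int.card_Icc]; omega
  have hnm : (Im.card : ℤ) = 2 * k - 3 := by
    have h1 : j ∈ Finset.Icc (1 - k) (k - 1) := hj
    have h2 : m ∈ (Finset.Icc (1 - k) (k - 1)).erase j :=
      Finset.mem_erase.mpr ⟨Ne.symm hjm, hm⟩
    have hc : ((Finset.Icc (1 - k) (k - 1)).card : ℤ) = 2 * k - 1 := by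
      rw [Int.card_Icc]; omega
    rw [hIm, Finset.card_erase_of_mem h2, Finset.card_erase_of_mem h1]
    have hcge : 2 ≤ (Finset.Icc (1 - k) (k - 1)).card := by omega
    omega
  have hScard : (S.card : ℤ) = 4 * k := by
    rw [hS, Finset.card_product, Finset.card_range]
    push_cast
    omega
  have hexp_ne : ∀ i ∈ I0, ∀ l ∈ I0, i ≠ l → ∀ c : ℂ, (c = 0 ∨ c = 1 ∨ c = -1) →
      Complex.exp (h * (L0 i - L0 l + c)) ≠ 1 := by
    intro i hi l hl hne c hc
    rcases hc with rfl | rfl | rfl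
    · have h0 := hq1 _ (hL0 i hi l hl hne 0 (by simp)).1
      simpa using h0
    · have h0 := hq1 _ (hL0 i hi l hl hne 1 (by simp)).1
      simpa using h0
    · have h0 := hq1 _ (hL0 i hi l hl hne 0 (by simp)).2
      intro heq
      apply h0
      rw [show h * (L0 i - L0 l + ((0:ℕ):ℂ) - 1) = h * (L0 i - L0 l + (-1)) by push_cast; ring]
      exact heq
  have hvinj : Set.InjOn v S := by
    rintro ⟨i, s⟩ hiS ⟨i2, s2⟩ hi2S heq
    simp only [hS, Finset.coe_product, Set.mem_prod, Finset.mem_coe, Finset.mem_range,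
      Finset.coe_range, Set.mem_Iio] at hiS hi2S
    obtain ⟨hi, hs⟩ := hiS
    obtain ⟨hi2, hs2⟩ := hi2S
    have hone : Complex.exp (h * ((L0 i - (s:ℂ)) - (L0 i2 - (s2:ℂ)))) = 1 := by
      rw [show h * ((L0 i - (s:ℂ)) - (L0 i2 - (s2:ℂ)))
          = h * (L0 i - (s:ℂ)) - h * (L0 i2 - (s2:ℂ)) by ring, Complex.exp_sub]
      rw [show Complex.exp (h * (L0 i - (s:ℂ))) = v (i, s) from rfl,
        show Complex.exp (h * (L0 i2 - (s2:ℂ))) = v (i2, s2) from rfl, heq]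
      exact div_self (by rw [hv]; exact Complex.exp_ne_zero _)
    by_cases hii : i = i2
    · subst hii
      have h1 : Complex.exp (h * ((s2:ℂ) - (s:ℂ))) = 1 := by
        rw [show h * ((s2:ℂ) - (s:ℂ)) = h * ((L0 i - (s:ℂ)) - (L0 i - (s2:ℂ))) by ring]
        exact hone
      interval_cases s <;> interval_cases s2
      · rfl
      · exfalso; apply hh; norm_num at h1; exact h1
      · exfalso; apply hh
        norm_num at h1
        rw [Complex.exp_neg, inv_eq_one] at h1
        exact h1
      · rfl
    · exfalso
      have hcval : ((s2:ℂ) - (s:ℂ)) = 0 ∨ ((s2:ℂ) - (s:ℂ)) = 1 ∨ ((s2:ℂ) - (s:ℂ)) = -1 := by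
        interval_cases s <;> interval_cases s2 <;> norm_num
      have hc := hexp_ne i hi i2 hi2 hii ((s2:ℂ) - (s:ℂ)) hcval
      apply hc
      rw [show h * (L0 i - L0 i2 + ((s2:ℂ) - (s:ℂ)))
          = h * ((L0 i - (s:ℂ)) - (L0 i2 - (s2:ℂ))) by ring]
      exact hone
  -- helper node values
  have hv0 : ∀ i : ℤ, Complex.exp (h * L0 i) = v (i, (0:ℕ)) := by
    intro i
    simp only [hv]
    congr 1
    push_cast
    ring
  have hv1 : ∀ i : ℤ, Complex.exp (h * (L0 i - 1)) = v (i, (1:ℕ)) := by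
    intro i
    simp only [hv]
    congr 1
    push_cast
    ring
  -- the polynomial
  set P : Polynomial ℂ := (∏ i ∈ I1, (Polynomial.X - Polynomial.C (Complex.exp (h * L1 i)))) *
      ∏ i ∈ Im, (Polynomial.X - Polynomial.C (Complex.exp (h * Lm i))) with hPdef
  have hPdeg : P.degree = ((I1.card + Im.card : ℕ) : WithBot ℕ) := by
    rw [hPdef, ← Lagrange.nodal_eq, ← Lagrange.nodal_eq, Polynomial.degree_mul,
      Lagrange.degree_nodal, Lagrange.degree_nodal]
    push_cast
    rfl
  have hPlt : P.degree < ((S.card - 1 : ℕ) : WithBot ℕ) := by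
    rw [hPdeg]
    have : I1.card + Im.card < S.card - 1 := by omega
    exact_mod_cast this
  -- constants
  set B1 := ∏ i ∈ I1, F (L1 i) with hB1def
  set Bm := ∏ i ∈ Im, F (Lm i) with hBmdef
  set K2a := ∏ i ∈ I0, F (L0 i) with hK2adef
  set K2b := ∏ i ∈ I0, F (L0 i - 1) with hK2bdef
  set Cc := (E - 1) * (K2a * K2b) / (F 1 * (B1 * Bm)) with hCcdef
  have hB1ne : B1 ≠ 0 := Finset.prod_ne_zero_iff.mpr fun i _ => hF0 _
  have hBmne : Bm ≠ 0 := Finset.prod_ne_zero_iff.mpr fun i _ => hF0 _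
  -- the per-term identity
  have hterm : ∀ l ∈ I0, ∀ s ∈ Finset.range 2,
      (-1 : ℂ) ^ s *
        ((∏ i ∈ I1, qbr h (L1 i - L0 l + (s : ℂ))) *
          ∏ i ∈ Im, qbr h (Lm i - L0 l + (s : ℂ))) /
        ∏ i ∈ I0.erase l, qbr h (L0 i - L0 l + (s : ℂ)) * qbr h (L0 i - L0 l + (s : ℂ) - 1) =
      Cc * (P.eval (v (l, s)) * ∏ q ∈ S.erase (l, s), (v (l, s) - v q)⁻¹) := by
    intro l hl s hsmem
    have hs : s < 2 := Finset.mem_range.mp hsmem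
    have hlS : (l, s) ∈ S := by rw [hS]; exact Finset.mem_product.mpr ⟨hl, hsmem⟩
    have hlS' : (l, 1 - s) ∈ S := by
      rw [hS]; exact Finset.mem_product.mpr ⟨hl, Finset.mem_range.mpr (by omega)⟩
    set x : ℂ := L0 l - (s : ℂ) with hx
    have hwv : Complex.exp (h * x) = v (l, s) := rfl
    -- rewrite the arguments
    have harg1 : ∀ i ∈ I1, qbr h (L1 i - L0 l + (s : ℂ)) = qbr h (L1 i - x) := by
      intro i _; congr 1; rw [hx]; ring
    have hargm : ∀ i ∈ Im, qbr h (Lm i - L0 l + (s : ℂ)) = qbr h (Lm i - x) := by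
      intro i _; congr 1; rw [hx]; ring
    have hargd : ∀ i ∈ I0.erase l,
        qbr h (L0 i - L0 l + (s : ℂ)) * qbr h (L0 i - L0 l + (s : ℂ) - 1)
          = qbr h (L0 i - x) * qbr h ((L0 i - 1) - x) := by
      intro i _
      congr 1
      · congr 1; rw [hx]; ring
      · congr 1; rw [hx]; ring
    rw [Finset.prod_congr rfl harg1, Finset.prod_congr rfl hargm,
      Finset.prod_congr rfl hargd, Finset.prod_mul_distrib]
    rw [hprod I1 L1 x, hprod Im Lm x, hprod (I0.erase l) L0 x,
      hprod (I0.erase l) (fun i => L0 i - 1) x]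
    rw [hwv]
    -- memberships and nonvanishing
    have hvne : ∀ p ∈ S, ∀ q ∈ S, p ≠ q → v p - v q ≠ 0 := by
      intro p hp q hq hne
      exact sub_ne_zero.mpr fun hEq => hne (hvinj hp hq hEq)
    have hA0ane : (∏ i ∈ I0.erase l, (v (l, s) - Complex.exp (h * L0 i))) ≠ 0 := by
      rw [Finset.prod_ne_zero_iff]
      intro i hi
      rw [hv0 i]
      have hiI : i ∈ I0 := (Finset.mem_erase.mp hi).2
      have hiS : (i, (0:ℕ)) ∈ S := by
        rw [hS]; exact Finset.mem_product.mpr ⟨hiI, Finset.mem_range.mpr (by omega)⟩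
      refine hvne _ hlS _ hiS ?_
      intro hcon
      exact (Finset.mem_erase.mp hi).1 (congrArg Prod.fst hcon).symm
    have hA0bne : (∏ i ∈ I0.erase l, (v (l, s) - Complex.exp (h * (L0 i - 1)))) ≠ 0 := by
      rw [Finset.prod_ne_zero_iff]
      intro i hi
      rw [hv1 i]
      have hiI : i ∈ I0 := (Finset.mem_erase.mp hi).2
      have hiS : (i, (1:ℕ)) ∈ S := by
        rw [hS]; exact Finset.mem_product.mpr ⟨hiI, Finset.mem_range.mpr (by omega)⟩
      refine hvne _ hlS _ hiS ?_
      intro hcon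
      exact (Finset.mem_erase.mp hi).1 (congrArg Prod.fst hcon).symm
    have hwpvne : v (l, s) - v (l, 1 - s) ≠ 0 := by
      refine hvne _ hlS _ hlS' ?_
      intro hcon
      have : s = 1 - s := (Prod.ext_iff.mp hcon).2
      omega
    have hB0ane : (∏ i ∈ I0.erase l, F (L0 i)) ≠ 0 :=
      Finset.prod_ne_zero_iff.mpr fun i _ => hF0 _
    have hB0bne : (∏ i ∈ I0.erase l, F (L0 i - 1)) ≠ 0 :=
      Finset.prod_ne_zero_iff.mpr fun i _ => hF0 _
    have hZ' : -(F x * D) ≠ 0 := neg_ne_zero.mpr (mul_ne_zero (hF0 x) hD)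
    have hee : I1.card + Im.card = 2 * (I0.erase l).card := by
      rw [Finset.card_erase_of_mem hl]
      have h1 : 1 ≤ I0.card := Finset.card_pos.mpr ⟨l, hl⟩
      omega
    -- combine the fractions
    rw [mul_div_assoc,
      combine_aux _ _ _ _ _ _ _ _ _ _ _ _ hee hZ' hB1ne hBmne hA0ane hA0bne]
    -- evaluate P
    have hPeval : P.eval (v (l, s)) =
        (∏ i ∈ I1, (v (l, s) - Complex.exp (h * L1 i))) *
          ∏ i ∈ Im, (v (l, s) - Complex.exp (h * Lm i)) := by
      rw [hPdef, Polynomial.eval_mul, Polynomial.eval_prod, Polynomial.eval_prod]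
      simp only [Polynomial.eval_sub, Polynomial.eval_X, Polynomial.eval_C]
    -- the erased product
    have hnotmem : (l, 1 - s) ∉ (I0.erase l) ×ˢ Finset.range 2 := by
      intro hcon
      exact (Finset.mem_erase.mp (Finset.mem_product.mp hcon).1).1 rfl
    have hErase : S.erase (l, s) = insert (l, 1 - s) ((I0.erase l) ×ˢ Finset.range 2) := by
      ext ⟨i, t⟩
      simp only [hS, Finset.mem_erase, Finset.mem_insert, Finset.mem_product,
        Finset.mem_range, Prod.mk.injEq, ne_eq]
      constructor
      · rintro ⟨hne, hiI0, ht⟩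
        by_cases hil : i = l
        · subst hil
          left
          refine ⟨rfl, ?_⟩
          have hts : t ≠ s := fun hcon => hne ⟨rfl, hcon⟩
          omega
        · right; exact ⟨⟨hil, hiI0⟩, ht⟩
      · rintro (⟨rfl, rfl⟩ | ⟨⟨hil, hiI0⟩, ht⟩)
        · exact ⟨fun hcon => by omega, hl, by omega⟩
        · exact ⟨fun hcon => hil hcon.1, hiI0, ht⟩
    have hprodE : ∏ q ∈ S.erase (l, s), (v (l, s) - v q)⁻¹ =
        ((v (l, s) - v (l, 1 - s)) *
          ((∏ i ∈ I0.erase l, (v (l, s) - Complex.exp (h * L0 i))) *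
            ∏ i ∈ I0.erase l, (v (l, s) - Complex.exp (h * (L0 i - 1)))))⁻¹ := by
      rw [hErase, Finset.prod_insert hnotmem, Finset.prod_product]
      have hinner : ∀ i ∈ I0.erase l,
          (∏ t ∈ Finset.range 2, (v (l, s) - v (i, t))⁻¹) =
            (v (l, s) - Complex.exp (h * L0 i))⁻¹ *
              (v (l, s) - Complex.exp (h * (L0 i - 1)))⁻¹ := by
        intro i _
        rw [show (2:ℕ) = 1 + 1 from rfl, Finset.prod_range_succ, Finset.prod_range_one,
          hv0, hv1]
      rw [Finset.prod_congr rfl hinner, Finset.prod_mul_distrib]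
      rw [mul_inv, mul_inv, ← Finset.prod_inv_distrib, ← Finset.prod_inv_distrib]
    rw [hPeval, hprodE, hCcdef, hK2adef, hK2bdef,
      ← Finset.mul_prod_erase I0 (fun i => F (L0 i)) hl,
      ← Finset.mul_prod_erase I0 (fun i => F (L0 i - 1)) hl]
    -- the scalar identity
    have hpv : (-1:ℂ) ^ s * ((v (l, s) - v (l, 1 - s)) * F 1)
        = (E - 1) * (F (L0 l) * F (L0 l - 1)) := by
      have e0 : v (l, (0:ℕ)) = F (L0 l) * F (L0 l) := by rw [← hv0 l, hFE]
      have e1 : v (l, (1:ℕ)) = F (L0 l - 1) * F (L0 l - 1) := by rw [← hv1 l, hFE]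
      have hab : F (L0 l - 1) * F 1 = F (L0 l) := by
        rw [hFmul]; congr 1; ring
      have hE2 : E = F 1 * F 1 := by
        rw [hFE, hE]; congr 1; ring
      interval_cases s
      · norm_num
        rw [e0, e1, hE2, ← hab]; ring
      · norm_num
        rw [e0, e1, hE2, ← hab]; ring
    exact final_aux _ _ _ _ _ _ _ _ _ _ _ _ hpv hB1ne hBmne
      (mul_ne_zero hA0ane hA0bne) hwpvne (hF0 1)
  -- assemble
  have hassemble : ∑ p ∈ S, Cc * (P.eval (v p) * ∏ q ∈ S.erase p, (v p - v q)⁻¹) = 0 := by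
    rw [← Finset.mul_sum, aux_lagrange_sum S v hvinj P hPlt, mul_zero]
  rw [Finset.sum_comm]
  have hform : (∑ l ∈ I0, ∑ s ∈ Finset.range 2, (-1 : ℂ) ^ s *
      ((∏ i ∈ I1, qbr h (L1 i - L0 l + (s : ℂ))) *
        ∏ i ∈ Im, qbr h (Lm i - L0 l + (s : ℂ))) /
      ∏ i ∈ I0.erase l, qbr h (L0 i - L0 l + (s : ℂ)) * qbr h (L0 i - L0 l + (s : ℂ) - 1))
      = ∑ p ∈ S, (-1 : ℂ) ^ p.2 *
      ((∏ i ∈ I1, qbr h (L1 i - L0 p.1 + (p.2 : ℂ))) *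
        ∏ i ∈ Im, qbr h (Lm i - L0 p.1 + (p.2 : ℂ))) /
      ∏ i ∈ I0.erase p.1, qbr h (L0 i - L0 p.1 + (p.2 : ℂ)) *
        qbr h (L0 i - L0 p.1 + (p.2 : ℂ) - 1) := by
    rw [hS, Finset.sum_product]
  rw [hform]
  have hfinal : ∀ p ∈ S, (-1 : ℂ) ^ p.2 *
      ((∏ i ∈ I1, qbr h (L1 i - L0 p.1 + (p.2 : ℂ))) *
        ∏ i ∈ Im, qbr h (Lm i - L0 p.1 + (p.2 : ℂ))) /
      ∏ i ∈ I0.erase p.1, qbr h (L0 i - L0 p.1 + (p.2 : ℂ)) *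
        qbr h (L0 i - L0 p.1 + (p.2 : ℂ) - 1)
      = Cc * (P.eval (v p) * ∏ q ∈ S.erase p, (v p - v q)⁻¹) := by
    intro p hp
    obtain ⟨l, s⟩ := p
    have hp' := Finset.mem_product.mp (by rwa [hS] at hp)
    exact hterm l hp'.1 s hp'.2
  exact (Finset.sum_congr rfl hfinal).trans hassemble
end

section
/- Let h be a complex number with exp(h) ≠ 1 and let [x] = (exp(hx/2) − exp(−hx/2))/(exp(h/2) − exp(−h/2)) for x ∈ ℂ. Let k ≥ 1 be an integer, fix two distinct indices j, m in the integer interval [−k, k−1], and let complex numbers L_{i,2k+2} (i ∈ [−k−1, k]), L_{l,2k+1} (l ∈ [−k, k]) and L_{i,2k} (i ∈ [−k, k−1], i ≠ j, i ≠ m) be given such that [L_{i,2k+1} − L_{l,2k+1} − s'] ≠ 0 and [L_{i,2k+1} − L_{l,2k+1} − s' + 1] ≠ 0 for all i ≠ l in [−k, k] and s' ∈ {0, 1}. Then ∑_{s'=0}^{1} ∑_{l=−k}^{k} (−1)^{s'} · ( ∏_{i=−k−1}^{k} [L_{i,2k+2} − L_{l,2k+1} − s'] · ∏_{i=−k, i≠j,m}^{k−1}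 [L_{i,2k} − L_{l,2k+1} − s'] ) / ( ∏_{i≠l, i=−k}^{k} [L_{i,2k+1} − L_{l,2k+1} − s'][L_{i,2k+1} − L_{l,2k+1} − s' + 1] ) = 0. (Identity (24b).) -/
open Finset Polynomial

private lemma qbr_sub (h x y : ℂ) :
    qbr h (x - y) = (Complex.exp (h * x) - Complex.exp (h * y)) /
      (Complex.exp (h * (x + y) / 2) * (Complex.exp (h / 2) - Complex.exp (-h / 2))) := by
  unfold qbr
  rw [show Complex.exp (h * x) - Complex.exp (h * y)
      = (Complex.exp (h * (x - y) / 2) - Complex.exp (-(h * (x - y)) / 2)) *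
        Complex.exp (h * (x + y) / 2) by
    rw [sub_mul, ← Complex.exp_add, ← Complex.exp_add]; ring_nf]
  rw [mul_comm (Complex.exp (h * (x + y) / 2))]
  exact (mul_div_mul_right _ _ (Complex.exp_ne_zero _)).symm

private lemma prod_qbr (h w : ℂ) (S : Finset ℤ) (f : ℤ → ℂ) :
    ∏ i ∈ S, qbr h (f i - w)
      = (∏ i ∈ S, (Complex.exp (h * f i) - Complex.exp (h * w)))
        / (Complex.exp (h * ((∑ i ∈ S, f i) + S.card * w) / 2)
            * (Complex.exp (h / 2) - Complex.exp (-h / 2)) ^ S.card) := by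
  simp only [qbr_sub]
  rw [Finset.prod_div_distrib, Finset.prod_mul_distrib, Finset.prod_const, ← Complex.exp_sum]
  congr 3
  rw [← Finset.sum_div, ← Finset.mul_sum, Finset.sum_add_distrib, Finset.sum_const,
    nsmul_eq_mul]

private lemma basis_coeff {ι : Type*} [DecidableEq ι] (s : Finset ι) (v : ι → ℂ)
    (hvs : Set.InjOn v s) {i : ι} (hi : i ∈ s) :
    (Lagrange.basis s v i).coeff (s.card - 1) = ∏ j ∈ s.erase i, (v i - v j)⁻¹ := by
  have hdeg := Lagrange.natDegree_basis hvs hi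
  rw [← hdeg, Polynomial.coeff_natDegree]
  unfold Lagrange.basis
  rw [Polynomial.leadingCoeff_prod]
  refine Finset.prod_congr rfl fun j hj => ?_
  unfold Lagrange.basisDivisor
  rw [Polynomial.leadingCoeff_mul, Polynomial.leadingCoeff_C,
    (Polynomial.monic_X_sub_C _).leadingCoeff, mul_one]

private lemma residue {ι : Type*} [DecidableEq ι] (s : Finset ι) (v : ι → ℂ)
    (hvs : Set.InjOn v s) (f : Polynomial ℂ) (hd : f.degree < ((s.card - 1 : ℕ) : ℕ)) :
    ∑ i ∈ s, f.eval (v i) / ∏ j ∈ s.erase i, (v i - v j) = 0 := by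
  have hlt : f.degree < s.card := lt_of_lt_of_le hd (by exact_mod_cast Nat.sub_le _ _)
  have h1 : f = Lagrange.interpolate s v (fun i => f.eval (v i)) :=
    Lagrange.eq_interpolate hvs hlt
  have h2 := congrArg (fun p => Polynomial.coeff p (s.card - 1)) h1
  simp only [Lagrange.interpolate_apply, Polynomial.finset_sum_coeff] at h2
  rw [Polynomial.coeff_eq_zero_of_degree_lt hd] at h2
  rw [show (∑ i ∈ s, f.eval (v i) / ∏ j ∈ s.erase i, (v i - v j))
      = ∑ i ∈ s, (Polynomial.C (f.eval (v i)) * Lagrange.basis s v i).coeff (s.card - 1) from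
    Finset.sum_congr rfl fun i hi => by
      rw [Polynomial.coeff_C_mul, basis_coeff s v hvs hi, div_eq_mul_inv,
        Finset.prod_inv_distrib]]
  exact h2.symm

private lemma alg1 (e A Q f : ℂ) (hf : f ≠ 0) : e * A / Q = (e * f) * (A / (Q * f)) := by
  rw [show (e * f) * (A / (Q * f)) = e * (A * f / (Q * f)) by ring,
    mul_div_mul_right _ _ hf, mul_div_assoc]

private lemma alg2 (e A Q f : ℂ) (hf : f ≠ 0) : -(e * A / Q) = (e * -f) * (A / (Q * f)) := by
  rw [show (e * -f) * (A / (Q * f)) = -(e * (A * f / (Q * f))) by ring,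
    mul_div_mul_right _ _ hf, mul_div_assoc]

/-- Identity (24b).  `L2 i` stands for `L_{i,2k+2}`, `L1 l` for `L_{l,2k+1}` and
`L0 i` for `L_{i,2k}`. -/
theorem identity_24b (h : ℂ) (hh : Complex.exp h ≠ 1) (k : ℤ) (hk : 1 ≤ k)
    (j m : ℤ) (hj : j ∈ Finset.Icc (-k) (k - 1)) (hm : m ∈ Finset.Icc (-k) (k - 1))
    (hjm : j ≠ m) (L2 L1 L0 : ℤ → ℂ)
    (hL1 : ∀ i ∈ Finset.Icc (-k) k, ∀ l ∈ Finset.Icc (-k) k, i ≠ l →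
      ∀ s' ∈ Finset.range 2,
        qbr h (L1 i - L1 l - (s' : ℂ)) ≠ 0 ∧ qbr h (L1 i - L1 l - (s' : ℂ) + 1) ≠ 0) :
    ∑ s' ∈ Finset.range 2, ∑ l ∈ Finset.Icc (-k) k, (-1 : ℂ) ^ s' *
      ((∏ i ∈ Finset.Icc (-k - 1) k, qbr h (L2 i - L1 l - (s' : ℂ))) *
        ∏ i ∈ ((Finset.Icc (-k) (k - 1)).erase j).erase m, qbr h (L0 i - L1 l - (s' : ℂ))) /
      ∏ i ∈ (Finset.Icc (-k) k).erase l,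
        qbr h (L1 i - L1 l - (s' : ℂ)) * qbr h (L1 i - L1 l - (s' : ℂ) + 1) = 0 := by
  classical
  have hD : Complex.exp (h / 2) - Complex.exp (-h / 2) ≠ 0 := by
    have he : Complex.exp (h / 2) - Complex.exp (-h / 2)
        = Complex.exp (-h / 2) * (Complex.exp h - 1) := by
      rw [mul_sub, ← Complex.exp_add, mul_one]; ring_nf
    rw [he]
    exact mul_ne_zero (Complex.exp_ne_zero _) (sub_ne_zero.mpr hh)
  have qne : ∀ x y : ℂ, qbr h (x - y) ≠ 0 →
      Complex.exp (h * x) - Complex.exp (h * y) ≠ 0 := by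
    intro x y hq hxy
    exact hq (by rw [qbr_sub, hxy, zero_div])
  have qne1 : ∀ d : ℂ, qbr h d ≠ 0 → Complex.exp (h * d) ≠ 1 := by
    intro d hq h1
    have h0 : qbr h (d - 0) ≠ 0 := by rwa [sub_zero]
    have h2 := qne d 0 h0
    rw [mul_zero, Complex.exp_zero, h1, sub_self] at h2
    exact h2 rfl
  have hnege : Complex.exp (-h) ≠ 1 := by
    intro hE
    exact hh (by rw [← inv_inv (Complex.exp h), ← Complex.exp_neg, hE, inv_one])
  -- index sets and cardinalities
  set I0 : Finset ℤ := ((Finset.Icc (-k) (k - 1)).erase j).erase m with hI0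
  have hjm' : m ∈ (Finset.Icc (-k) (k - 1)).erase j := Finset.mem_erase.mpr ⟨Ne.symm hjm, hm⟩
  set n1 : ℕ := (Finset.Icc (-k) k).card with hn1
  set n2 : ℕ := (Finset.Icc (-k - 1) k).card with hn2
  set n0 : ℕ := I0.card with hn0
  have hn1' : (n1 : ℤ) = 2 * k + 1 := by rw [hn1, Int.card_Icc]; omega
  have hn2' : (n2 : ℤ) = 2 * k + 2 := by rw [hn2, Int.card_Icc]; omega
  have hn0' : (n0 : ℤ) = 2 * k - 2 := by
    have h1 : n0 = ((Finset.Icc (-k) (k - 1)).erase j).card - 1 :=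
      by rw [hn0, hI0, Finset.card_erase_of_mem hjm']
    have h2 : ((Finset.Icc (-k) (k - 1)).erase j).card = (Finset.Icc (-k) (k - 1)).card - 1 :=
      Finset.card_erase_of_mem hj
    have h3 : (Finset.Icc (-k) (k - 1)).card = (k - 1 + 1 - -k).toNat := Int.card_Icc _ _
    omega
  set nn : ℕ := n1 - 1 with hnn
  have hnncast : (n2 : ℂ) + (n0 : ℂ) = 2 * (nn : ℂ) := by
    have : (n2 : ℤ) + (n0 : ℤ) = 2 * (nn : ℤ) := by omega
    exact_mod_cast this
  -- data
  set v : ℤ × ℕ → ℂ := fun p => Complex.exp (h * (L1 p.1 + (p.2 : ℂ))) with hv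
  set pairs : Finset (ℤ × ℕ) := Finset.Icc (-k) k ×ˢ Finset.range 2 with hpairs
  set S1 : ℂ := ∑ i ∈ Finset.Icc (-k) k, L1 i with hS1
  set S2 : ℂ := ∑ i ∈ Finset.Icc (-k - 1) k, L2 i with hS2
  set S0 : ℂ := ∑ i ∈ I0, L0 i with hS0
  set K : ℂ := Complex.exp (h * (2 * S1 + (nn : ℂ) - S2 - S0) / 2) * (1 - Complex.exp h)
    with hK
  set P : Polynomial ℂ :=
    (∏ i ∈ Finset.Icc (-k - 1) k, (Polynomial.C (Complex.exp (h * L2 i)) - Polynomial.X)) *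
      ∏ i ∈ I0, (Polynomial.C (Complex.exp (h * L0 i)) - Polynomial.X) with hP
  -- injectivity
  have hinj : Set.InjOn v pairs := by
    rintro ⟨i, t⟩ hp ⟨i', t'⟩ hq hvv
    simp only [hpairs, Finset.coe_product, Set.mem_prod, Finset.mem_coe, Finset.mem_Icc,
      Finset.mem_range] at hp hq
    simp only [hv] at hvv
    have hE1 : Complex.exp (h * ((L1 i + (t : ℂ)) - (L1 i' + (t' : ℂ)))) = 1 := by
      rw [mul_sub, Complex.exp_sub, hvv, div_self (Complex.exp_ne_zero _)]
    by_cases hii : i = i'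
    · subst hii
      have ht : t = t' := by
        by_contra hne
        have h2 : t < 2 := hp.2
        have h2' : t' < 2 := hq.2
        interval_cases t <;> interval_cases t'
        · exact hne rfl
        · exact hnege (by rw [show -h = h * ((L1 i + ((0:ℕ):ℂ)) - (L1 i + ((1:ℕ):ℂ))) by
            push_cast; ring]; exact hE1)
        · exact hh (by rw [show h = h * ((L1 i + ((1:ℕ):ℂ)) - (L1 i + ((0:ℕ):ℂ))) by
            push_cast; ring]; exact hE1)
        · exact hne rfl
      rw [ht]
    · exfalso
      have hmem : ∀ s'' : ℕ, s'' ∈ Finset.range 2 →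
          qbr h (L1 i - L1 i' - (s'' : ℂ)) ≠ 0 ∧ qbr h (L1 i - L1 i' - (s'' : ℂ) + 1) ≠ 0 :=
        fun s'' hs'' => hL1 i (Finset.mem_Icc.mpr hp.1) i' (Finset.mem_Icc.mpr hq.1) hii s'' hs''
      have h2 : t < 2 := hp.2
      have h2' : t' < 2 := hq.2
      interval_cases t <;> interval_cases t'
      · exact qne1 _ (hmem 0 (by norm_num)).1
          (by rw [show h * (L1 i - L1 i' - ((0:ℕ):ℂ)) =
              h * ((L1 i + ((0:ℕ):ℂ)) - (L1 i' + ((0:ℕ):ℂ))) by push_cast; ring]; exact hE1)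
      · exact qne1 _ (hmem 1 (by norm_num)).1
          (by rw [show h * (L1 i - L1 i' - ((1:ℕ):ℂ)) =
              h * ((L1 i + ((0:ℕ):ℂ)) - (L1 i' + ((1:ℕ):ℂ))) by push_cast; ring]; exact hE1)
      · exact qne1 _ (hmem 0 (by norm_num)).2
          (by rw [show h * (L1 i - L1 i' - ((0:ℕ):ℂ) + 1) =
              h * ((L1 i + ((1:ℕ):ℂ)) - (L1 i' + ((0:ℕ):ℂ))) by push_cast; ring]; exact hE1)
      · exact qne1 _ (hmem 0 (by norm_num)).1
          (by rw [show h * (L1 i - L1 i' - ((0:ℕ):ℂ)) =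
              h * ((L1 i + ((1:ℕ):ℂ)) - (L1 i' + ((1:ℕ):ℂ))) by push_cast; ring]; exact hE1)
  -- degree bound
  have hPdeg : P.degree < ((pairs.card - 1 : ℕ) : WithBot ℕ) := by
    have hfacne : ∀ c : ℂ, (Polynomial.C c - Polynomial.X) ≠ 0 := fun c hc =>
      Polynomial.X_sub_C_ne_zero c (by linear_combination -hc)
    have hfacdeg : ∀ c : ℂ, (Polynomial.C c - Polynomial.X).natDegree = 1 := by
      intro c
      rw [show Polynomial.C c - Polynomial.X = -(Polynomial.X - Polynomial.C c) by ring,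
        Polynomial.natDegree_neg, Polynomial.natDegree_X_sub_C]
    have hA : (∏ i ∈ Finset.Icc (-k - 1) k,
        (Polynomial.C (Complex.exp (h * L2 i)) - Polynomial.X)) ≠ 0 :=
      Finset.prod_ne_zero_iff.mpr fun i _ => hfacne _
    have hB : (∏ i ∈ I0, (Polynomial.C (Complex.exp (h * L0 i)) - Polynomial.X)) ≠ 0 :=
      Finset.prod_ne_zero_iff.mpr fun i _ => hfacne _
    have hnd : P.natDegree = n2 + n0 := by
      rw [hP, Polynomial.natDegree_mul hA hB,
        Polynomial.natDegree_prod _ _ fun i _ => hfacne _,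
        Polynomial.natDegree_prod _ _ fun i _ => hfacne _]
      simp only [hfacdeg, Finset.sum_const, smul_eq_mul, mul_one]
      rw [hn2, hn0]
    have hcardp : pairs.card = n1 * 2 := by
      rw [hpairs, Finset.card_product, Finset.card_range, hn1]
    have hlt : P.natDegree < pairs.card - 1 := by rw [hnd, hcardp]; omega
    calc P.degree ≤ (P.natDegree : WithBot ℕ) := Polynomial.degree_le_natDegree
      _ < ((pairs.card - 1 : ℕ) : WithBot ℕ) := by exact_mod_cast hlt
  -- the core cancellation identity
  have core : ∀ l ∈ Finset.Icc (-k) k, ∀ w : ℂ,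
      (∀ i ∈ (Finset.Icc (-k) k).erase l,
        (Complex.exp (h * L1 i) - Complex.exp (h * w) ≠ 0) ∧
        (Complex.exp (h * (L1 i + 1)) - Complex.exp (h * w) ≠ 0)) →
      ((∏ i ∈ Finset.Icc (-k - 1) k, qbr h (L2 i - w)) * ∏ i ∈ I0, qbr h (L0 i - w)) /
        (∏ i ∈ (Finset.Icc (-k) k).erase l, qbr h (L1 i - w) * qbr h ((L1 i + 1) - w))
      = Complex.exp (h * (2 * S1 - 2 * L1 l + (nn : ℂ) - S2 - S0) / 2) *
        ((∏ i ∈ Finset.Icc (-k - 1) k, (Complex.exp (h * L2 i) - Complex.exp (h * w))) *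
         ∏ i ∈ I0, (Complex.exp (h * L0 i) - Complex.exp (h * w))) /
        ((∏ i ∈ (Finset.Icc (-k) k).erase l,
            (Complex.exp (h * L1 i) - Complex.exp (h * w))) *
         ∏ i ∈ (Finset.Icc (-k) k).erase l,
            (Complex.exp (h * (L1 i + 1)) - Complex.exp (h * w))) := by
    intro l hl w hnz
    have hcerase : ((Finset.Icc (-k) k).erase l).card = nn := by
      rw [Finset.card_erase_of_mem hl, hnn, hn1]
    have hQA : (∏ i ∈ (Finset.Icc (-k) k).erase l,
        (Complex.exp (h * L1 i) - Complex.exp (h * w))) ≠ 0 :=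
      Finset.prod_ne_zero_iff.mpr fun i hi => (hnz i hi).1
    have hQB : (∏ i ∈ (Finset.Icc (-k) k).erase l,
        (Complex.exp (h * (L1 i + 1)) - Complex.exp (h * w))) ≠ 0 :=
      Finset.prod_ne_zero_iff.mpr fun i hi => (hnz i hi).2
    have hsum1 : ∑ i ∈ (Finset.Icc (-k) k).erase l, L1 i = S1 - L1 l :=
      eq_sub_of_add_eq (Finset.sum_erase_add _ _ hl)
    have hsum2 : ∑ i ∈ (Finset.Icc (-k) k).erase l, (L1 i + 1) = S1 - L1 l + (nn : ℂ) := by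
      rw [Finset.sum_add_distrib, Finset.sum_const, hcerase, nsmul_eq_mul, mul_one, hsum1]
    rw [Finset.prod_mul_distrib, prod_qbr, prod_qbr, prod_qbr, prod_qbr,
      ← hS2, ← hS0, hcerase, ← hn2, ← hn0, hsum1, hsum2]
    have hDpow : (Complex.exp (h / 2) - Complex.exp (-h / 2)) ^ nn *
        (Complex.exp (h / 2) - Complex.exp (-h / 2)) ^ nn
        = (Complex.exp (h / 2) - Complex.exp (-h / 2)) ^ n2 *
          (Complex.exp (h / 2) - Complex.exp (-h / 2)) ^ n0 := by
      rw [← pow_add, ← pow_add]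
      congr 1
      omega
    have hexp : Complex.exp (h * ((S1 - L1 l) + (nn : ℂ) * w) / 2) *
        Complex.exp (h * ((S1 - L1 l + (nn : ℂ)) + (nn : ℂ) * w) / 2)
        = Complex.exp (h * (2 * S1 - 2 * L1 l + (nn : ℂ) - S2 - S0) / 2) *
          (Complex.exp (h * (S2 + (n2 : ℂ) * w) / 2) *
           Complex.exp (h * (S0 + (n0 : ℂ) * w) / 2)) := by
      rw [← Complex.exp_add, ← Complex.exp_add, ← Complex.exp_add]
      congr 1
      linear_combination (-(h * w / 2)) * hnncast
    have hED : (Complex.exp (h * ((S1 - L1 l) + (nn : ℂ) * w) / 2) *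
          (Complex.exp (h / 2) - Complex.exp (-h / 2)) ^ nn) *
        (Complex.exp (h * ((S1 - L1 l + (nn : ℂ)) + (nn : ℂ) * w) / 2) *
          (Complex.exp (h / 2) - Complex.exp (-h / 2)) ^ nn)
        = Complex.exp (h * (2 * S1 - 2 * L1 l + (nn : ℂ) - S2 - S0) / 2) *
          ((Complex.exp (h * (S2 + (n2 : ℂ) * w) / 2) *
              (Complex.exp (h / 2) - Complex.exp (-h / 2)) ^ n2) *
           (Complex.exp (h * (S0 + (n0 : ℂ) * w) / 2) *
              (Complex.exp (h / 2) - Complex.exp (-h / 2)) ^ n0)) := by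
      calc _ = (Complex.exp (h * ((S1 - L1 l) + (nn : ℂ) * w) / 2) *
            Complex.exp (h * ((S1 - L1 l + (nn : ℂ)) + (nn : ℂ) * w) / 2)) *
            ((Complex.exp (h / 2) - Complex.exp (-h / 2)) ^ nn *
             (Complex.exp (h / 2) - Complex.exp (-h / 2)) ^ nn) := by ring
        _ = _ := by rw [hDpow, hexp]; ring
    rw [div_mul_div_comm, div_mul_div_comm, div_div_div_eq, hED]
    have hCne : (Complex.exp (h * (S2 + (n2 : ℂ) * w) / 2) *
          (Complex.exp (h / 2) - Complex.exp (-h / 2)) ^ n2) *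
        (Complex.exp (h * (S0 + (n0 : ℂ) * w) / 2) *
          (Complex.exp (h / 2) - Complex.exp (-h / 2)) ^ n0) ≠ 0 :=
      mul_ne_zero (mul_ne_zero (Complex.exp_ne_zero _) (pow_ne_zero _ hD))
        (mul_ne_zero (Complex.exp_ne_zero _) (pow_ne_zero _ hD))
    generalize hgc : (Complex.exp (h * (S2 + (n2 : ℂ) * w) / 2) *
          (Complex.exp (h / 2) - Complex.exp (-h / 2)) ^ n2) *
        (Complex.exp (h * (S0 + (n0 : ℂ) * w) / 2) *
          (Complex.exp (h / 2) - Complex.exp (-h / 2)) ^ n0) = c at hCne ⊢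
    rw [show (∏ i ∈ Finset.Icc (-k - 1) k,
          (Complex.exp (h * L2 i) - Complex.exp (h * w))) *
        (∏ i ∈ I0, (Complex.exp (h * L0 i) - Complex.exp (h * w))) *
        (Complex.exp (h * (2 * S1 - 2 * L1 l + (nn : ℂ) - S2 - S0) / 2) * c)
        = c * (Complex.exp (h * (2 * S1 - 2 * L1 l + (nn : ℂ) - S2 - S0) / 2) *
          ((∏ i ∈ Finset.Icc (-k - 1) k,
            (Complex.exp (h * L2 i) - Complex.exp (h * w))) *
           ∏ i ∈ I0, (Complex.exp (h * L0 i) - Complex.exp (h * w)))) from by ring,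
      show c * ((∏ i ∈ (Finset.Icc (-k) k).erase l,
            (Complex.exp (h * L1 i) - Complex.exp (h * w))) *
          ∏ i ∈ (Finset.Icc (-k) k).erase l,
            (Complex.exp (h * (L1 i + 1)) - Complex.exp (h * w)))
        = c * ((∏ i ∈ (Finset.Icc (-k) k).erase l,
            (Complex.exp (h * L1 i) - Complex.exp (h * w))) *
          ∏ i ∈ (Finset.Icc (-k) k).erase l,
            (Complex.exp (h * (L1 i + 1)) - Complex.exp (h * w))) from rfl,
      mul_div_mul_left _ _ hCne]
  -- splitting the erased pair set
  have hsplit : ∀ l ∈ Finset.Icc (-k) k, ∀ t' u : ℕ, t' < 2 → u < 2 → t' ≠ u →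
      pairs.erase (l, t') = ((Finset.Icc (-k) k).erase l) ×ˢ Finset.range 2 ∪ {(l, u)} := by
    intro l hl t' u h1 h2 hne
    have hlk := Finset.mem_Icc.mp hl
    ext ⟨i, s⟩
    simp only [hpairs, Finset.mem_erase, Finset.mem_product, Finset.mem_union,
      Finset.mem_singleton, Finset.mem_range, Finset.mem_Icc, Prod.mk.injEq, ne_eq]
    omega
  have hRprod : ∀ l ∈ Finset.Icc (-k) k, ∀ t' u : ℕ, t' < 2 → u < 2 → t' ≠ u → ∀ Z : ℂ,
      ∏ q ∈ pairs.erase (l, t'), (Z - v q)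
        = ((∏ i ∈ (Finset.Icc (-k) k).erase l, (Complex.exp (h * L1 i) - Z)) *
           ∏ i ∈ (Finset.Icc (-k) k).erase l, (Complex.exp (h * (L1 i + 1)) - Z)) *
          (Z - v (l, u)) := by
    intro l hl t' u h1 h2 hne Z
    have hdisj : Disjoint (((Finset.Icc (-k) k).erase l) ×ˢ Finset.range 2)
        ({((l : ℤ), (u : ℕ))} : Finset (ℤ × ℕ)) := by
      simp [Finset.disjoint_singleton_right, Finset.mem_product]
    rw [hsplit l hl t' u h1 h2 hne, Finset.prod_union hdisj, Finset.prod_singleton]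
    congr 1
    rw [Finset.prod_product, ← Finset.prod_mul_distrib]
    refine Finset.prod_congr rfl fun i _ => ?_
    rw [Finset.prod_range_succ, Finset.prod_range_one]
    simp only [hv, Nat.cast_zero, Nat.cast_one, add_zero]
    ring
  -- evaluation of P
  have hPeval : ∀ Z : ℂ, P.eval Z =
      (∏ i ∈ Finset.Icc (-k - 1) k, (Complex.exp (h * L2 i) - Z)) *
      ∏ i ∈ I0, (Complex.exp (h * L0 i) - Z) := by
    intro Z
    simp [hP, Polynomial.eval_prod]
  -- the key per-term identity
  have key : ∀ p ∈ pairs, (-1 : ℂ) ^ p.2 *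
      ((∏ i ∈ Finset.Icc (-k - 1) k, qbr h (L2 i - L1 p.1 - (p.2 : ℂ))) *
        ∏ i ∈ I0, qbr h (L0 i - L1 p.1 - (p.2 : ℂ))) /
      ∏ i ∈ (Finset.Icc (-k) k).erase p.1,
        (qbr h (L1 i - L1 p.1 - (p.2 : ℂ)) * qbr h (L1 i - L1 p.1 - (p.2 : ℂ) + 1))
      = K * (P.eval (v p) / ∏ q ∈ pairs.erase p, (v p - v q)) := by
    rintro ⟨l, t⟩ hp
    obtain ⟨hl, htr⟩ := Finset.mem_product.mp hp
    rw [Finset.mem_range] at htr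
    dsimp only
    have hZ0 : v (l, 0) = Complex.exp (h * L1 l) := by
      simp [hv]
    have hZ1 : v (l, 1) = Complex.exp (h * (L1 l + 1)) := by
      simp [hv]
    have hoth : Complex.exp (h * L1 l) - Complex.exp (h * (L1 l + 1))
        = Complex.exp (h * L1 l) * (1 - Complex.exp h) := by
      rw [show h * (L1 l + 1) = h * L1 l + h by ring, Complex.exp_add]; ring
    have hfne : Complex.exp (h * L1 l) - Complex.exp (h * (L1 l + 1)) ≠ 0 := by
      rw [hoth]
      exact mul_ne_zero (Complex.exp_ne_zero _) (sub_ne_zero.mpr (Ne.symm hh))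
    have hfne1 : Complex.exp (h * (L1 l + 1)) - Complex.exp (h * L1 l) ≠ 0 := fun hsub =>
      hfne (by linear_combination -hsub)
    have hsc : Complex.exp (h * (2 * S1 - 2 * L1 l + (nn : ℂ) - S2 - S0) / 2) *
        (Complex.exp (h * L1 l) - Complex.exp (h * (L1 l + 1))) = K := by
      rw [hoth, hK, ← mul_assoc, ← Complex.exp_add]
      congr 2
      ring
    have hsc1 : Complex.exp (h * (2 * S1 - 2 * L1 l + (nn : ℂ) - S2 - S0) / 2) *
        -(Complex.exp (h * (L1 l + 1)) - Complex.exp (h * L1 l)) = K := by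
      rw [neg_sub]; exact hsc
    interval_cases t
    · -- t = 0
      have hnz0 : ∀ i ∈ (Finset.Icc (-k) k).erase l,
          (Complex.exp (h * L1 i) - Complex.exp (h * L1 l) ≠ 0) ∧
          (Complex.exp (h * (L1 i + 1)) - Complex.exp (h * L1 l) ≠ 0) := by
        intro i hi
        obtain ⟨hine, hiI⟩ := Finset.mem_erase.mp hi
        have h01 := hL1 i hiI l hl hine 0 (by norm_num)
        constructor
        · exact qne (L1 i) (L1 l) (by
            have := h01.1; rwa [Nat.cast_zero, sub_zero] at this)
        · exact qne (L1 i + 1) (L1 l) (by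
            have := h01.2; rwa [Nat.cast_zero, sub_zero, sub_add_eq_add_sub] at this)
      simp only [Nat.cast_zero, pow_zero, one_mul, sub_zero, sub_add_eq_add_sub]
      rw [core l hl (L1 l) hnz0, hPeval, hZ0,
        hRprod l hl 0 1 (by norm_num) (by norm_num) (by norm_num), hZ1, ← hsc]
      exact alg1 _ _ _ _ hfne
    · -- t = 1
      have hnz1 : ∀ i ∈ (Finset.Icc (-k) k).erase l,
          (Complex.exp (h * L1 i) - Complex.exp (h * (L1 l + 1)) ≠ 0) ∧
          (Complex.exp (h * (L1 i + 1)) - Complex.exp (h * (L1 l + 1)) ≠ 0) := by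
        intro i hi
        obtain ⟨hine, hiI⟩ := Finset.mem_erase.mp hi
        have h01 := hL1 i hiI l hl hine 1 (by norm_num)
        constructor
        · exact qne (L1 i) (L1 l + 1) (by
            have := h01.1; rwa [Nat.cast_one, sub_sub] at this)
        · exact qne (L1 i + 1) (L1 l + 1) (by
            have := h01.2; rwa [Nat.cast_one, sub_sub, sub_add_eq_add_sub] at this)
      simp only [Nat.cast_one, pow_one, neg_one_mul, neg_div, sub_sub, sub_add_eq_add_sub]
      rw [core l hl (L1 l + 1) hnz1, hPeval, hZ1,
        hRprod l hl 1 0 (by norm_num) (by norm_num) (by norm_num), hZ0, ← hsc1]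
      exact alg2 _ _ _ _ hfne1
  -- assemble
  rw [Finset.sum_comm, ← Finset.sum_product', ← hpairs, Finset.sum_congr rfl key,
    ← Finset.mul_sum, residue pairs v hinj P hPdeg, mul_zero]
end

section
/- Let h be a complex number with exp(h) ≠ 1 and let [x] = (exp(hx/2) − exp(−hx/2))/(exp(h/2) − exp(−h/2)) for x ∈ ℂ. Let k ≥ 1 be an integer, fix two distinct indices l, p in the integer interval [−k, k], and let complex numbers L_{i,2k+1} (i ∈ [−k, k], i ≠ l, i ≠ p), L_{j,2k} (j ∈ [−k, k−1]) and L_{i,2k−1} (i ∈ [1−k, k−1]) be given such that [L_{i,2k} − L_{j,2k} + s] ≠ 0 and [L_{i,2k} − L_{j,2k} + s − 1] ≠ 0 for all i ≠ j in [−k, k−1] and s ∈ {0, 1}. Then ∑_{s=0}^{1} ∑_{j=−k}^{k−1} (−1)^s · ( ∏_{i=−k, i≠l,p}^{k} [L_{i,2k+1} − L_{j,2k} + s] · ∏_{i=1−k}^{k−1} [L_{i,2k−1} − L_{j,2k} + s] ) / ( ∏_{i≠j, i=−k}^{k−1} [L_{i,2k} − L_{j,2k} + s][L_{i,2k} − L_{j,2k}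 + s − 1] ) = 0. (Identity (24d).) -/
open Finset Polynomial

noncomputable def fE (h x : ℂ) : ℂ := Complex.exp (h * x / 2)

lemma fE_ne (h x : ℂ) : fE h x ≠ 0 := Complex.exp_ne_zero _

lemma fE_mul (h x y : ℂ) : fE h x * fE h y = fE h (x + y) := by
  rw [fE, fE, fE, ← Complex.exp_add]
  congr 1; ring

lemma fE_sq (h x : ℂ) : fE h x ^ 2 = Complex.exp (h * x) := by
  rw [sq, fE_mul, fE]
  congr 1; ring

lemma qbr_form (h x y : ℂ) : qbr h (x - y)
    = (fE h x ^ 2 - fE h y ^ 2)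
      / (fE h x * (fE h y * (Complex.exp (h / 2) - Complex.exp (-h / 2)))) := by
  have key : fE h x * fE h y *
      (Complex.exp (h * (x - y) / 2) - Complex.exp (-(h * (x - y)) / 2))
      = fE h x ^ 2 - fE h y ^ 2 := by
    simp only [fE, sq, mul_sub, ← Complex.exp_add]
    congr 2 <;> ring
  have hne : fE h x * fE h y ≠ 0 := mul_ne_zero (fE_ne h x) (fE_ne h y)
  rw [qbr, ← key, show fE h x * (fE h y * (Complex.exp (h / 2) - Complex.exp (-h / 2)))
      = (fE h x * fE h y) * (Complex.exp (h / 2) - Complex.exp (-h / 2)) by ring,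
    mul_div_mul_left _ _ hne]

lemma qbr_zero_of_exp (h t : ℂ) (ht : Complex.exp (h * t) = 1) : qbr h t = 0 := by
  have h1 : Complex.exp (h * t / 2) * Complex.exp (-(h * t) / 2) = 1 := by
    rw [← Complex.exp_add, show h * t / 2 + -(h * t) / 2 = 0 by ring, Complex.exp_zero]
  have h2 : Complex.exp (h * t / 2) * Complex.exp (h * t / 2) = 1 := by
    rw [← Complex.exp_add, show h * t / 2 + h * t / 2 = h * t by ring, ht]
  have h3 : Complex.exp (-(h * t) / 2) = Complex.exp (h * t / 2) :=
    mul_left_cancel₀ (Complex.exp_ne_zero _) (h1.trans h2.symm)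
  rw [qbr, h3, sub_self, zero_div]

lemma key2 (D sgn E1 E2 R G1 G2 X1 X2 Hh v u : ℂ) (hss : sgn * sgn = 1)
    (hG1 : G1 ≠ 0) (hG2 : G2 ≠ 0) (hR : R ≠ 0) (hH : Hh ≠ 0) (hD : D ≠ 0)
    (hsg : sgn ≠ 0) (hX1 : X1 ≠ 0) (hX2 : X2 ≠ 0) (hv : v ≠ 0) (hu : u ≠ 0) :
    sgn * (E1 / (G1 * X1) * (E2 / (G2 * X2))) / (R / (Hh * (X1 * X2)))
      = D * (v * u * Hh) / (G1 * G2) * (E1 * E2 * ((sgn * (D * v * u)) * R)⁻¹) := by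
  have hsgn : sgn⁻¹ = sgn := inv_eq_of_mul_eq_one_right hss
  rw [mul_inv (sgn * (D * v * u)) R, mul_inv sgn, hsgn]
  field_simp [hG1, hG2, hR, hD, hv, hu, hX1, hX2, hH]

theorem core_lagrange {ι : Type*} [DecidableEq ι] (t : Finset ι) (v : ι → ℂ)
    (hvs : Set.InjOn v t) (P : ℂ[X]) (hP : P.degree < ((t.card - 1 : ℕ) : WithBot ℕ)) :
    ∑ i ∈ t, P.eval (v i) * ∏ j ∈ t.erase i, (v i - v j)⁻¹ = 0 := by
  rcases t.eq_empty_or_nonempty with rfl | hne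
  · simp
  have hlt : P.degree < (t.card : WithBot ℕ) :=
    hP.trans_le (by exact_mod_cast Nat.sub_le _ _)
  have h1 : P = Lagrange.interpolate t v (fun i => P.eval (v i)) := Lagrange.eq_interpolate hvs hlt
  have h2 : P.coeff (t.card - 1) = 0 := Polynomial.coeff_eq_zero_of_degree_lt hP
  rw [h1, Lagrange.interpolate_apply, Polynomial.finset_sum_coeff] at h2
  rw [← h2]
  refine Finset.sum_congr rfl fun i hi => ?_
  have hb : Lagrange.basis t v i
      = Polynomial.C (Lagrange.nodalWeight t v i) * Lagrange.nodal (t.erase i) v := by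
    rw [Lagrange.basis_eq_prod_sub_inv_mul_nodal_div hi, ← Lagrange.nodal_erase_eq_nodal_div hi]
  have hdeg : (Lagrange.nodal (t.erase i) v).natDegree = t.card - 1 := by
    rw [Lagrange.natDegree_nodal, Finset.card_erase_of_mem hi]
  have hc : (Lagrange.nodal (t.erase i) v).coeff (t.card - 1) = 1 := by
    rw [← hdeg]; exact (Lagrange.nodal_monic).coeff_natDegree
  rw [Polynomial.coeff_C_mul, hb, Polynomial.coeff_C_mul, hc, mul_one, Lagrange.nodalWeight]

/-- Identity (24d).  `L1 i` stands for `L_{i,2k+1}`, `L0 j` for `L_{j,2k}` and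
`Lm i` for `L_{i,2k-1}`. -/
theorem identity_24d (h : ℂ) (hh : Complex.exp h ≠ 1) (k : ℤ) (hk : 1 ≤ k)
    (l p : ℤ) (hl : l ∈ Finset.Icc (-k) k) (hp : p ∈ Finset.Icc (-k) k)
    (hlp : l ≠ p) (L1 L0 Lm : ℤ → ℂ)
    (hL0 : ∀ i ∈ Finset.Icc (-k) (k - 1), ∀ j ∈ Finset.Icc (-k) (k - 1), i ≠ j →
      ∀ s ∈ Finset.range 2,
        qbr h (L0 i - L0 j + (s : ℂ)) ≠ 0 ∧ qbr h (L0 i - L0 j + (s : ℂ) - 1) ≠ 0) :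
    ∑ s ∈ Finset.range 2, ∑ j ∈ Finset.Icc (-k) (k - 1), (-1 : ℂ) ^ s *
      ((∏ i ∈ ((Finset.Icc (-k) k).erase l).erase p, qbr h (L1 i - L0 j + (s : ℂ))) *
        ∏ i ∈ Finset.Icc (1 - k) (k - 1), qbr h (Lm i - L0 j + (s : ℂ))) /
      ∏ i ∈ (Finset.Icc (-k) (k - 1)).erase j,
        qbr h (L0 i - L0 j + (s : ℂ)) * qbr h (L0 i - L0 j + (s : ℂ) - 1) = 0 := by
  classical
  set D : ℂ := Complex.exp (h / 2) - Complex.exp (-h / 2) with hDdef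
  have hD : D ≠ 0 := by
    intro hc
    apply hh
    have he : Complex.exp (h / 2) = Complex.exp (-h / 2) := sub_eq_zero.mp hc
    calc Complex.exp h = Complex.exp (h / 2) * Complex.exp (h / 2) := by
          rw [← Complex.exp_add]; congr 1; ring
      _ = Complex.exp (h / 2) * Complex.exp (-h / 2) := by rw [he]
      _ = 1 := by rw [← Complex.exp_add]; rw [show h / 2 + -h / 2 = 0 by ring, Complex.exp_zero]
  have hone : fE h 1 * fE h (-1) = 1 := by
    rw [fE_mul, show (1 : ℂ) + -1 = 0 by ring, fE]
    simp [Complex.exp_zero]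
  have hDf : D = fE h 1 - fE h (-1) := by
    rw [hDdef, fE, fE]; congr 2 <;> ring
  -- index sets
  set A0 : Finset ℤ := Finset.Icc (-k) (k - 1) with hA0
  set A1 : Finset ℤ := ((Finset.Icc (-k) k).erase l).erase p with hA1
  set A2 : Finset ℤ := Finset.Icc (1 - k) (k - 1) with hA2
  set S : Finset (ℕ × ℤ) := Finset.range 2 ×ˢ A0 with hS
  -- node values
  set μ : ℕ × ℤ → ℂ := fun ν => L0 ν.2 - (ν.1 : ℂ) with hμ
  set V : ℕ × ℤ → ℂ := fun ν => fE h (μ ν) ^ 2 with hV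
  -- basic nonvanishing consequence of hL0
  have keyne : ∀ i ∈ A0, ∀ j ∈ A0, i ≠ j → ∀ s : ℕ, s < 2 →
      Complex.exp (h * ((L0 i - L0 j) + (s : ℂ))) ≠ 1 ∧
      Complex.exp (h * ((L0 i - L0 j) + (s : ℂ) - 1)) ≠ 1 := by
    intro i hi j hj hij s hs
    have := hL0 i hi j hj hij s (Finset.mem_range.mpr hs)
    exact ⟨fun hc => this.1 (qbr_zero_of_exp _ _ hc),
           fun hc => this.2 (qbr_zero_of_exp _ _ hc)⟩
  -- injectivity of the nodes
  have hinj : Set.InjOn V ↑S := by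
    rintro ⟨a, i⟩ ha ⟨b, j⟩ hb hVeq
    simp only [hS, Finset.mem_coe, Finset.mem_product, Finset.mem_range] at ha hb
    obtain ⟨ha1', ha2⟩ := ha
    obtain ⟨hb1', hb2⟩ := hb
    have hVeq' : Complex.exp (h * (L0 i - (a : ℂ))) = Complex.exp (h * (L0 j - (b : ℂ))) := by
      rw [← fE_sq, ← fE_sq]; exact hVeq
    have hx : Complex.exp (h * ((L0 i - (a : ℂ)) - (L0 j - (b : ℂ)))) = 1 := by
      rw [mul_sub, Complex.exp_sub, hVeq', div_self (Complex.exp_ne_zero _)]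
    by_cases hij : i = j
    · subst hij
      have hab : a = b := by
        by_contra hab
        apply hh
        interval_cases a <;> interval_cases b
        · exact absurd rfl hab
        · rw [show h * (L0 i - ((0:ℕ) : ℂ) - (L0 i - ((1:ℕ) : ℂ))) = h by push_cast; ring] at hx
          exact hx
        · rw [show h * (L0 i - ((1:ℕ) : ℂ) - (L0 i - ((0:ℕ) : ℂ))) = -h by push_cast; ring,
            Complex.exp_neg, inv_eq_one] at hx
          exact hx
        · exact absurd rfl hab
      exact Prod.ext hab rfl
    · exfalso
      interval_cases a <;> interval_cases b
      · exact (keyne i ha2 j hb2 hij 0 (by norm_num)).1 (by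
          rw [show h * (L0 i - L0 j + ((0:ℕ) : ℂ)) =
            h * (L0 i - ((0:ℕ) : ℂ) - (L0 j - ((0:ℕ) : ℂ))) by push_cast; ring]; exact hx)
      · exact (keyne i ha2 j hb2 hij 1 (by norm_num)).1 (by
          rw [show h * (L0 i - L0 j + ((1:ℕ) : ℂ)) =
            h * (L0 i - ((0:ℕ) : ℂ) - (L0 j - ((1:ℕ) : ℂ))) by push_cast; ring]; exact hx)
      · exact (keyne i ha2 j hb2 hij 0 (by norm_num)).2 (by
          rw [show h * (L0 i - L0 j + ((0:ℕ) : ℂ) - 1) =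
            h * (L0 i - ((1:ℕ) : ℂ) - (L0 j - ((0:ℕ) : ℂ))) by push_cast; ring]; exact hx)
      · exact (keyne i ha2 j hb2 hij 0 (by norm_num)).1 (by
          rw [show h * (L0 i - L0 j + ((0:ℕ) : ℂ)) =
            h * (L0 i - ((1:ℕ) : ℂ) - (L0 j - ((1:ℕ) : ℂ))) by push_cast; ring]; exact hx)

  -- the polynomial
  set P : Polynomial ℂ := (∏ i ∈ A1, (Polynomial.C (fE h (L1 i) ^ 2) - Polynomial.X)) *
      ∏ i ∈ A2, (Polynomial.C (fE h (Lm i) ^ 2) - Polynomial.X) with hPoly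
  -- cardinalities
  have c0 : A0.card = (2 * k).toNat := by
    rw [hA0, Int.card_Icc]; congr 1; ring
  have hpmem : p ∈ (Finset.Icc (-k) k).erase l := Finset.mem_erase.mpr ⟨Ne.symm hlp, hp⟩
  have c1 : A1.card = (2 * k + 1).toNat - 2 := by
    rw [hA1, Finset.card_erase_of_mem hpmem, Finset.card_erase_of_mem hl, Int.card_Icc,
      show k + 1 - -k = 2 * k + 1 by ring]
    omega
  have c2 : A2.card = (2 * k - 1).toNat := by
    rw [hA2, Int.card_Icc]; congr 1; ring
  have hm : 2 * (A0.card - 1) = A1.card + A2.card := by rw [c0, c1, c2]; omega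
  have hScard : S.card = 2 * A0.card := by rw [hS, Finset.card_product, Finset.card_range]
  -- degree of P
  have hfact : ∀ c : ℂ, (Polynomial.C c - Polynomial.X : Polynomial ℂ) ≠ 0 ∧
      (Polynomial.C c - Polynomial.X : Polynomial ℂ).natDegree = 1 := by
    intro c
    have he : (Polynomial.C c - Polynomial.X : Polynomial ℂ)
        = -(Polynomial.X - Polynomial.C c) := by ring
    constructor
    · rw [he, neg_ne_zero]; exact Polynomial.X_sub_C_ne_zero c
    · rw [he, Polynomial.natDegree_neg, Polynomial.natDegree_X_sub_C]
  have hP1ne : (∏ i ∈ A1, (Polynomial.C (fE h (L1 i) ^ 2) - Polynomial.X)) ≠ 0 :=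
    Finset.prod_ne_zero_iff.mpr fun i _ => (hfact _).1
  have hP2ne : (∏ i ∈ A2, (Polynomial.C (fE h (Lm i) ^ 2) - Polynomial.X)) ≠ 0 :=
    Finset.prod_ne_zero_iff.mpr fun i _ => (hfact _).1
  have hPdegn : P.natDegree = A1.card + A2.card := by
    rw [hPoly, Polynomial.natDegree_mul hP1ne hP2ne,
      Polynomial.natDegree_prod _ _ (fun i _ => (hfact _).1),
      Polynomial.natDegree_prod _ _ (fun i _ => (hfact _).1),
      Finset.sum_congr rfl (fun i _ => (hfact (fE h (L1 i) ^ 2)).2),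
      Finset.sum_congr rfl (fun i _ => (hfact (fE h (Lm i) ^ 2)).2),
      Finset.sum_const, Finset.sum_const, smul_eq_mul, mul_one, smul_eq_mul, mul_one]
  have hdegP : P.degree < ((S.card - 1 : ℕ) : WithBot ℕ) := by
    rw [Polynomial.degree_eq_natDegree (mul_ne_zero hP1ne hP2ne), hPdegn]
    have hlt : A1.card + A2.card < S.card - 1 := by rw [hScard]; omega
    exact_mod_cast hlt
  -- constants
  have hG1 : (∏ i ∈ A1, fE h (L1 i)) ≠ 0 := Finset.prod_ne_zero_iff.mpr fun i _ => fE_ne _ _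
  have hG2 : (∏ i ∈ A2, fE h (Lm i)) ≠ 0 := Finset.prod_ne_zero_iff.mpr fun i _ => fE_ne _ _
  -- the per-node identity
  have main : ∀ ν ∈ S, (-1 : ℂ) ^ ν.1 *
      ((∏ i ∈ A1, qbr h (L1 i - L0 ν.2 + (ν.1 : ℂ))) *
        ∏ i ∈ A2, qbr h (Lm i - L0 ν.2 + (ν.1 : ℂ))) /
      ∏ i ∈ A0.erase ν.2,
        qbr h (L0 i - L0 ν.2 + (ν.1 : ℂ)) * qbr h (L0 i - L0 ν.2 + (ν.1 : ℂ) - 1)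
      = (D * (∏ ν' ∈ S, fE h (L0 ν'.2 - (ν'.1 : ℂ))) /
          ((∏ i ∈ A1, fE h (L1 i)) * ∏ i ∈ A2, fE h (Lm i))) *
        (P.eval (fE h (L0 ν.2 - (ν.1 : ℂ)) ^ 2) *
          ∏ ν' ∈ S.erase ν,
            (fE h (L0 ν.2 - (ν.1 : ℂ)) ^ 2 - fE h (L0 ν'.2 - (ν'.1 : ℂ)) ^ 2)⁻¹) := by
    rintro ⟨s, j⟩ hν
    have hν' := hν
    obtain ⟨hs, hj⟩ : s < 2 ∧ j ∈ A0 := by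
      simpa [hS, Finset.mem_product] using hν
    have hj2 : -k ≤ j ∧ j ≤ k - 1 := by simpa [hA0, Finset.mem_Icc] using hj
    dsimp only
    -- numerator 1
    have h1 : (∏ i ∈ A1, qbr h (L1 i - L0 j + (s : ℂ)))
        = (∏ i ∈ A1, (fE h (L1 i) ^ 2 - fE h (L0 j - (s : ℂ)) ^ 2))
          / ((∏ i ∈ A1, fE h (L1 i)) * (fE h (L0 j - (s : ℂ)) * D) ^ A1.card) := by
      calc (∏ i ∈ A1, qbr h (L1 i - L0 j + (s : ℂ)))
          = ∏ i ∈ A1, (fE h (L1 i) ^ 2 - fE h (L0 j - (s : ℂ)) ^ 2) / (fE h (L1 i) * (fE h (L0 j - (s : ℂ)) * D)) := by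
            refine Finset.prod_congr rfl fun i _ => ?_
            rw [show L1 i - L0 j + (s : ℂ) = L1 i - (L0 j - (s : ℂ)) by ring, qbr_form]
        _ = _ := by
            rw [Finset.prod_div_distrib, Finset.prod_mul_distrib, Finset.prod_const]
    -- numerator 2
    have h2 : (∏ i ∈ A2, qbr h (Lm i - L0 j + (s : ℂ)))
        = (∏ i ∈ A2, (fE h (Lm i) ^ 2 - fE h (L0 j - (s : ℂ)) ^ 2))
          / ((∏ i ∈ A2, fE h (Lm i)) * (fE h (L0 j - (s : ℂ)) * D) ^ A2.card) := by
      calc (∏ i ∈ A2, qbr h (Lm i - L0 j + (s : ℂ)))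
          = ∏ i ∈ A2, (fE h (Lm i) ^ 2 - fE h (L0 j - (s : ℂ)) ^ 2) / (fE h (Lm i) * (fE h (L0 j - (s : ℂ)) * D)) := by
            refine Finset.prod_congr rfl fun i _ => ?_
            rw [show Lm i - L0 j + (s : ℂ) = Lm i - (L0 j - (s : ℂ)) by ring, qbr_form]
        _ = _ := by
            rw [Finset.prod_div_distrib, Finset.prod_mul_distrib, Finset.prod_const]
    -- denominator
    have h3 : (∏ i ∈ A0.erase j,
          qbr h (L0 i - L0 j + (s : ℂ)) * qbr h (L0 i - L0 j + (s : ℂ) - 1))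
        = (∏ i ∈ A0.erase j, (fE h (L0 i) ^ 2 - fE h (L0 j - (s : ℂ)) ^ 2) * (fE h (L0 i - 1) ^ 2 - fE h (L0 j - (s : ℂ)) ^ 2))
          / ((∏ i ∈ A0.erase j, fE h (L0 i) * fE h (L0 i - 1)) *
            ((fE h (L0 j - (s : ℂ)) * D) * (fE h (L0 j - (s : ℂ)) * D)) ^ (A0.erase j).card) := by
      calc (∏ i ∈ A0.erase j,
            qbr h (L0 i - L0 j + (s : ℂ)) * qbr h (L0 i - L0 j + (s : ℂ) - 1))
          = ∏ i ∈ A0.erase j,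
            ((fE h (L0 i) ^ 2 - fE h (L0 j - (s : ℂ)) ^ 2) * (fE h (L0 i - 1) ^ 2 - fE h (L0 j - (s : ℂ)) ^ 2))
            / ((fE h (L0 i) * fE h (L0 i - 1)) * ((fE h (L0 j - (s : ℂ)) * D) * (fE h (L0 j - (s : ℂ)) * D))) := by
            refine Finset.prod_congr rfl fun i _ => ?_
            rw [show L0 i - L0 j + (s : ℂ) - 1 = (L0 i - 1) - (L0 j - (s : ℂ)) by ring,
              show L0 i - L0 j + (s : ℂ) = L0 i - (L0 j - (s : ℂ)) by ring,
              qbr_form, qbr_form, div_mul_div_comm]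
            congr 1 <;> ring
        _ = _ := by
            rw [Finset.prod_div_distrib]
            congr 1
            rw [Finset.prod_mul_distrib, Finset.prod_const]
    -- exponent bookkeeping
    have hpow : ((fE h (L0 j - (s : ℂ)) * D) * (fE h (L0 j - (s : ℂ)) * D)) ^ (A0.erase j).card
        = (fE h (L0 j - (s : ℂ)) * D) ^ A1.card * (fE h (L0 j - (s : ℂ)) * D) ^ A2.card := by
      rw [← sq, ← pow_mul, Finset.card_erase_of_mem hj, hm, pow_add]
    -- node-set decomposition
    have hnot : ((1 - s : ℕ), j) ∉ Finset.range 2 ×ˢ (A0.erase j) := by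
      simp [Finset.mem_product]
    have hsplit : S.erase (s, j) = insert ((1 - s : ℕ), j) (Finset.range 2 ×ˢ (A0.erase j)) := by
      ext ⟨a, b⟩
      simp only [hS, Finset.mem_erase, Finset.mem_product, Finset.mem_range, Finset.mem_insert,
        Prod.mk.injEq, ne_eq, hA0, Finset.mem_Icc]
      omega
    have hprod2 : ∀ g : ℕ × ℤ → ℂ, (∏ ν' ∈ Finset.range 2 ×ˢ (A0.erase j), g ν')
        = ∏ i ∈ A0.erase j, g (0, i) * g (1, i) := by
      intro g
      rw [Finset.prod_product, Finset.prod_range_succ, Finset.prod_range_one,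
        ← Finset.prod_mul_distrib]
    -- the missing-node identity
    have hmiss : (-1 : ℂ) ^ s * (fE h (L0 j - (s : ℂ)) ^ 2 - fE h (L0 j - ((1 - s : ℕ) : ℂ)) ^ 2) = D * fE h (L0 j - (s : ℂ)) * fE h (L0 j - ((1 - s : ℕ) : ℂ)) := by
      interval_cases s
      · have hvu : fE h (L0 j - ((1 - 0 : ℕ) : ℂ))
            = fE h (L0 j - ((0 : ℕ) : ℂ)) * fE h (-1) := by
          rw [fE_mul]; congr 1; push_cast; ring
        rw [hvu, pow_zero, one_mul, hDf]
        linear_combination (-(fE h (L0 j - ((0 : ℕ) : ℂ)) ^ 2)) * hone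
      · have hvu : fE h (L0 j - ((1 : ℕ) : ℂ))
            = fE h (L0 j - ((1 - 1 : ℕ) : ℂ)) * fE h (-1) := by
          rw [fE_mul]; congr 1; push_cast; ring
        rw [hvu, pow_one, hDf]
        linear_combination (-(fE h (L0 j - ((1 - 1 : ℕ) : ℂ)) ^ 2)) * hone
    have hvu2 : fE h (L0 j - (s : ℂ)) ^ 2 - fE h (L0 j - ((1 - s : ℕ) : ℂ)) ^ 2 = (-1 : ℂ) ^ s * (D * fE h (L0 j - (s : ℂ)) * fE h (L0 j - ((1 - s : ℕ) : ℂ))) := by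
      interval_cases s
      · linear_combination hmiss
      · linear_combination -hmiss
    -- splitting the nodal products
    have hEQ : (∏ ν' ∈ S.erase (s, j), (fE h (L0 j - (s : ℂ)) ^ 2 - fE h (L0 ν'.2 - (ν'.1 : ℂ)) ^ 2))
        = ((-1 : ℂ) ^ s * (D * fE h (L0 j - (s : ℂ)) * fE h (L0 j - ((1 - s : ℕ) : ℂ)))) *
          ∏ i ∈ A0.erase j, ((fE h (L0 i) ^ 2 - fE h (L0 j - (s : ℂ)) ^ 2) * (fE h (L0 i - 1) ^ 2 - fE h (L0 j - (s : ℂ)) ^ 2)) := by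
      rw [hsplit, Finset.prod_insert hnot,
        hprod2 (fun ν' => fE h (L0 j - (s : ℂ)) ^ 2 - fE h (L0 ν'.2 - (ν'.1 : ℂ)) ^ 2)]
      rw [show (fE h (L0 j - (s : ℂ)) ^ 2 - fE h (L0 j - ((1 - s : ℕ) : ℂ)) ^ 2)
          = (-1 : ℂ) ^ s * (D * fE h (L0 j - (s : ℂ)) * fE h (L0 j - ((1 - s : ℕ) : ℂ))) from hvu2]
      congr 1
      refine Finset.prod_congr rfl fun i _ => ?_
      push_cast
      simp only [sub_zero]
      ring
    have hZeq : (∏ ν' ∈ S, fE h (L0 ν'.2 - (ν'.1 : ℂ)))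
        = fE h (L0 j - (s : ℂ)) * fE h (L0 j - ((1 - s : ℕ) : ℂ)) * ∏ i ∈ A0.erase j, (fE h (L0 i) * fE h (L0 i - 1)) := by
      calc (∏ ν' ∈ S, fE h (L0 ν'.2 - (ν'.1 : ℂ)))
          = fE h (L0 j - (s : ℂ)) * ∏ ν' ∈ S.erase (s, j), fE h (L0 ν'.2 - (ν'.1 : ℂ)) := by
            rw [← Finset.mul_prod_erase S (fun ν' => fE h (L0 ν'.2 - (ν'.1 : ℂ))) hν']
        _ = fE h (L0 j - (s : ℂ)) * (fE h (L0 j - ((1 - s : ℕ) : ℂ)) * ∏ i ∈ A0.erase j,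
              (fE h (L0 i - ((0 : ℕ) : ℂ)) * fE h (L0 i - ((1 : ℕ) : ℂ)))) := by
            rw [hsplit, Finset.prod_insert hnot,
              hprod2 (fun ν' => fE h (L0 ν'.2 - (ν'.1 : ℂ)))]
        _ = _ := by
            rw [← mul_assoc]
            congr 1
            refine Finset.prod_congr rfl fun i _ => ?_
            push_cast
            simp only [sub_zero]
    -- evaluation of P
    have hPeval : P.eval (fE h (L0 j - (s : ℂ)) ^ 2)
        = (∏ i ∈ A1, (fE h (L1 i) ^ 2 - fE h (L0 j - (s : ℂ)) ^ 2)) * ∏ i ∈ A2, (fE h (Lm i) ^ 2 - fE h (L0 j - (s : ℂ)) ^ 2) := by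
      rw [hPoly]
      simp [Polynomial.eval_prod]
    -- nonvanishing facts
    have hvne : fE h (L0 j - (s : ℂ)) ≠ 0 := fE_ne _ _
    have hune : fE h (L0 j - ((1 - s : ℕ) : ℂ)) ≠ 0 := fE_ne _ _
    have hvD : fE h (L0 j - (s : ℂ)) * D ≠ 0 := mul_ne_zero hvne hD
    have hHne : (∏ i ∈ A0.erase j, fE h (L0 i) * fE h (L0 i - 1)) ≠ 0 :=
      Finset.prod_ne_zero_iff.mpr fun i _ => mul_ne_zero (fE_ne _ _) (fE_ne _ _)
    have hRne : (∏ i ∈ A0.erase j, (fE h (L0 i) ^ 2 - fE h (L0 j - (s : ℂ)) ^ 2) * (fE h (L0 i - 1) ^ 2 - fE h (L0 j - (s : ℂ)) ^ 2)) ≠ 0 := by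
      rw [Finset.prod_ne_zero_iff]
      intro i hi
      obtain ⟨hij, hiA⟩ := Finset.mem_erase.mp hi
      have hq := hL0 i hiA j hj hij s (Finset.mem_range.mpr hs)
      apply mul_ne_zero
      · intro hc
        apply hq.1
        rw [show L0 i - L0 j + (s : ℂ) = L0 i - (L0 j - (s : ℂ)) by ring, qbr_form, hc, zero_div]
      · intro hc
        apply hq.2
        rw [show L0 i - L0 j + (s : ℂ) - 1 = (L0 i - 1) - (L0 j - (s : ℂ)) by ring,
          qbr_form, hc, zero_div]
    have hsne : ((-1 : ℂ)) ^ s ≠ 0 := pow_ne_zero _ (by norm_num)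
    -- assemble
    rw [h1, h2, h3, hpow, hPeval, Finset.prod_inv_distrib, hEQ, hZeq]
    have hX1 : (fE h (L0 j - (s : ℂ)) * D) ^ A1.card ≠ 0 := pow_ne_zero _ hvD
    have hX2 : (fE h (L0 j - (s : ℂ)) * D) ^ A2.card ≠ 0 := pow_ne_zero _ hvD
    have hss : ((-1 : ℂ)) ^ s * ((-1 : ℂ)) ^ s = 1 := by
      rcases (by omega : s = 0 ∨ s = 1) with rfl | rfl <;> norm_num
    exact key2 D ((-1 : ℂ) ^ s) _ _ _ _ _ _ _ _ _ _ hss hG1 hG2 hRne hHne hD hsne hX1 hX2 hvne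
      hune
  -- final assembly
  rw [← Finset.sum_product', ← hS]
  rw [Finset.sum_congr rfl main, ← Finset.mul_sum]
  have hzero := core_lagrange S V hinj P hdegP
  simp only [hV, hμ] at hzero
  rw [hzero, mul_zero]
end

section
/- Let q be a nonzero complex number with q² ≠ 1, let n ≥ 1 be an integer, and let A₁, …, A_n be complex numbers such that the 2n numbers A₁, …, A_n, q²A₁, …, q²A_n are pairwise distinct. Let B₁, …, B_{n−1} and C₁, …, C_{n−1} be arbitrary complex numbers. Then ∑_{i=1}^{n} (1/A_i) · ( ( ∏_{t=1}^{n−1} (A_i − q²B_t)(A_i − q²C_t) ) / ( ∏_{t≠i, t=1}^{n} (A_i − A_t)(A_i − q²A_t) ) − ( ∏_{t=1}^{n−1} (A_i − B_t)(A_i − C_t) ) / ( ∏_{t≠i, t=1}^{n} (A_i − A_t)(A_i − q⁻²A_t) ) ) = 0. (Identity (A29), the rational form of identity (A26); note each A_i ≠ 0 since A_i ≠ q²A_i.) -/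
open Finset

lemma key_lagrange {F : Type*} [Field F] {ι : Type*} [DecidableEq ι] (s : Finset ι) (v : ι → F)
    (hv : Set.InjOn v s) (P : Polynomial F) (hP : P.degree < s.card) :
    ∑ i ∈ s, P.eval (v i) / ∏ j ∈ s.erase i, (v i - v j) = P.coeff (s.card - 1) := by
  conv_rhs => rw [Lagrange.eq_interpolate hv hP]
  rw [Lagrange.interpolate_apply, Polynomial.finset_sum_coeff]
  refine (Finset.sum_congr rfl fun i hi => ?_).symm
  rw [Polynomial.coeff_C_mul]
  have hb : (Lagrange.basis s v i).coeff (s.card - 1) = (∏ j ∈ s.erase i, (v i - v j))⁻¹ := by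
    have hnd := Lagrange.natDegree_basis hv hi
    rw [← hnd, Polynomial.coeff_natDegree, Lagrange.basis, Polynomial.leadingCoeff_prod,
      ← Finset.prod_inv_distrib]
    refine Finset.prod_congr rfl fun j hj => ?_
    rw [Lagrange.basisDivisor, Polynomial.leadingCoeff_mul, Polynomial.leadingCoeff_C,
      (Polynomial.monic_X_sub_C (v j)).leadingCoeff, mul_one]
  rw [hb, div_eq_mul_inv]

lemma erase_disjSum_inl {α β : Type*} [DecidableEq α] [DecidableEq β]
    (s : Finset α) (t : Finset β) (i : α) :
    (s.disjSum t).erase (Sum.inl i) = (s.erase i).disjSum t := by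
  ext x
  cases x <;> simp [Finset.mem_erase, and_comm]

lemma erase_disjSum_inr {α β : Type*} [DecidableEq α] [DecidableEq β]
    (s : Finset α) (t : Finset β) (i : β) :
    (s.disjSum t).erase (Sum.inr i) = s.disjSum (t.erase i) := by
  ext x
  cases x <;> simp [Finset.mem_erase, and_comm]

/-- Identity (A29). -/
theorem identity_A29 (q : ℂ) (hq : q ≠ 0) (hq2 : q ^ 2 ≠ 1) (n : ℕ) (hn : 1 ≤ n)
    (A B C : ℕ → ℂ)
    (hAA : ∀ i ∈ Finset.Icc 1 n, ∀ t ∈ Finset.Icc 1 n, i ≠ t → A i ≠ A t)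
    (hAq : ∀ i ∈ Finset.Icc 1 n, ∀ t ∈ Finset.Icc 1 n, A i ≠ q ^ 2 * A t) :
    ∑ i ∈ Finset.Icc 1 n, (1 / A i) *
      ((∏ t ∈ Finset.Icc 1 (n - 1), (A i - q ^ 2 * B t) * (A i - q ^ 2 * C t)) /
          (∏ t ∈ (Finset.Icc 1 n).erase i, (A i - A t) * (A i - q ^ 2 * A t))
        - (∏ t ∈ Finset.Icc 1 (n - 1), (A i - B t) * (A i - C t)) /
          ∏ t ∈ (Finset.Icc 1 n).erase i, (A i - A t) * (A i - (q ^ 2)⁻¹ * A t)) = 0 := by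
  set p : ℂ := q ^ 2 with hpdef
  have hp : p ≠ 0 := pow_ne_zero 2 hq
  have hp1 : p ≠ 1 := hq2
  have hu1 : p⁻¹ ≠ 1 := by
    intro h
    exact hp1 (by rw [← inv_inv p, h, inv_one])
  have hA0 : ∀ i ∈ Finset.Icc 1 n, A i ≠ 0 := fun i hi h =>
    hAq i hi i hi (by rw [h, mul_zero])
  set s2 : Finset (ℕ ⊕ ℕ) := (Finset.Icc 1 n).disjSum (Finset.Icc 1 n) with hs2
  set v : ℕ ⊕ ℕ → ℂ := Sum.elim A (fun t => p⁻¹ * A t) with hv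
  have hinj : Set.InjOn v ↑s2 := by
    intro x hx y hy hxy
    rcases x with a | a <;> rcases y with b | b <;>
      simp only [hs2, Finset.mem_coe, Finset.inl_mem_disjSum, Finset.inr_mem_disjSum]
        at hx hy <;>
      simp only [hv, Sum.elim_inl, Sum.elim_inr] at hxy
    · by_contra hne
      exact hAA a hx b hy (fun h => hne (by rw [h])) hxy
    · exact absurd (by rw [hxy, ← mul_assoc, mul_inv_cancel₀ hp, one_mul]) (hAq b hy a hx)
    · exact absurd (by rw [← hxy, ← mul_assoc, mul_inv_cancel₀ hp, one_mul]) (hAq a hx b hy)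
    · have hab : A a = A b := mul_left_cancel₀ (inv_ne_zero hp) hxy
      by_contra hne
      exact hAA a hx b hy (fun h => hne (by rw [h])) hab
  set P : Polynomial ℂ := ∏ t ∈ Finset.Icc 1 (n - 1),
      (Polynomial.X - Polynomial.C (B t)) * (Polynomial.X - Polynomial.C (C t)) with hPdef
  have hnd : P.natDegree ≤ 2 * (n - 1) := by
    refine le_trans (Polynomial.natDegree_prod_le _ _) ?_
    calc ∑ t ∈ Finset.Icc 1 (n - 1),
          ((Polynomial.X - Polynomial.C (B t)) * (Polynomial.X - Polynomial.C (C t))).natDegree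
        ≤ ∑ t ∈ Finset.Icc 1 (n - 1), 2 := by
          apply Finset.sum_le_sum
          intro t _
          exact le_trans Polynomial.natDegree_mul_le (by simp [Polynomial.natDegree_X_sub_C])
      _ = 2 * (n - 1) := by simp [Nat.card_Icc, mul_comm]
  have hcard : s2.card = n + n := by simp [hs2, Nat.card_Icc]
  have hdeg : P.degree < (s2.card : WithBot ℕ) := by
    refine lt_of_le_of_lt Polynomial.degree_le_natDegree ?_
    rw [hcard]
    exact_mod_cast lt_of_le_of_lt hnd (by omega)
  have hsum := key_lagrange s2 v hinj P hdeg
  have hcoeff : P.coeff (s2.card - 1) = 0 :=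
    Polynomial.coeff_eq_zero_of_natDegree_lt (by rw [hcard]; omega)
  rw [hcoeff, hs2, Finset.sum_disjSum] at hsum
  have hterm : ∀ i ∈ Finset.Icc 1 n,
      (1 / A i) *
      ((∏ t ∈ Finset.Icc 1 (n - 1), (A i - p * B t) * (A i - p * C t)) /
          (∏ t ∈ (Finset.Icc 1 n).erase i, (A i - A t) * (A i - p * A t))
        - (∏ t ∈ Finset.Icc 1 (n - 1), (A i - B t) * (A i - C t)) /
          ∏ t ∈ (Finset.Icc 1 n).erase i, (A i - A t) * (A i - p⁻¹ * A t)) =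
      ((1 - p) / p) *
        (P.eval (v (Sum.inl i)) /
            ∏ j ∈ ((Finset.Icc 1 n).disjSum (Finset.Icc 1 n)).erase (Sum.inl i),
              (v (Sum.inl i) - v j)
         + P.eval (v (Sum.inr i)) /
            ∏ j ∈ ((Finset.Icc 1 n).disjSum (Finset.Icc 1 n)).erase (Sum.inr i),
              (v (Sum.inr i) - v j)) := by
    intro i hi
    have ha : A i ≠ 0 := hA0 i hi
    have hDne : ∀ t ∈ (Finset.Icc 1 n).erase i, A i - A t ≠ 0 := fun t ht =>
      sub_ne_zero_of_ne (hAA i hi t (Finset.mem_erase.mp ht).2 (Ne.symm (Finset.mem_erase.mp ht).1))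
    have hDpne : ∀ t ∈ (Finset.Icc 1 n).erase i, A i - p * A t ≠ 0 := fun t ht =>
      sub_ne_zero_of_ne (hAq i hi t (Finset.mem_erase.mp ht).2)
    have hDune : ∀ t ∈ (Finset.Icc 1 n).erase i, A i - p⁻¹ * A t ≠ 0 := by
      intro t ht
      refine sub_ne_zero_of_ne (fun h => hAq t (Finset.mem_erase.mp ht).2 i hi ?_)
      rw [h, ← mul_assoc, mul_inv_cancel₀ hp, one_mul]
    set a : ℂ := A i with hadef
    set D : ℂ := ∏ t ∈ (Finset.Icc 1 n).erase i, (a - A t) with hDdef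
    set Dp : ℂ := ∏ t ∈ (Finset.Icc 1 n).erase i, (a - p * A t) with hDpdef
    set Du : ℂ := ∏ t ∈ (Finset.Icc 1 n).erase i, (a - p⁻¹ * A t) with hDudef
    have hD : D ≠ 0 := Finset.prod_ne_zero_iff.mpr hDne
    have hDp : Dp ≠ 0 := Finset.prod_ne_zero_iff.mpr hDpne
    have hDu : Du ≠ 0 := Finset.prod_ne_zero_iff.mpr hDune
    set N1 : ℂ := ∏ t ∈ Finset.Icc 1 (n - 1), (a - p * B t) * (a - p * C t) with hN1def
    set N2 : ℂ := ∏ t ∈ Finset.Icc 1 (n - 1), (a - B t) * (a - C t) with hN2def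
    set w : ℂ := p⁻¹ ^ (n - 1) with hwdef
    have hw : w ≠ 0 := pow_ne_zero _ (inv_ne_zero hp)
    have hcarder : ((Finset.Icc 1 n).erase i).card = n - 1 := by
      rw [Finset.card_erase_of_mem hi, Nat.card_Icc]
      omega
    -- evaluate the two residue terms
    have heval1 : P.eval (v (Sum.inl i)) = N2 := by
      simp [hPdef, hv, Polynomial.eval_prod, hN2def, hadef]
    have heval2 : P.eval (v (Sum.inr i)) = w ^ 2 * N1 := by
      have : ∀ t ∈ Finset.Icc 1 (n - 1),
          (p⁻¹ * a - B t) * (p⁻¹ * a - C t) = p⁻¹ ^ 2 * ((a - p * B t) * (a - p * C t)) := by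
        intro t _
        have h1 : p⁻¹ * a - B t = p⁻¹ * (a - p * B t) := by
          rw [mul_sub, ← mul_assoc, inv_mul_cancel₀ hp, one_mul]
        have h2 : p⁻¹ * a - C t = p⁻¹ * (a - p * C t) := by
          rw [mul_sub, ← mul_assoc, inv_mul_cancel₀ hp, one_mul]
        rw [h1, h2]; ring
      simp only [hPdef, hv, Sum.elim_inr, Polynomial.eval_prod, Polynomial.eval_mul,
        Polynomial.eval_sub, Polynomial.eval_X, Polynomial.eval_C]
      rw [Finset.prod_congr rfl this, Finset.prod_mul_distrib, Finset.prod_const, Nat.card_Icc]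
      have harith : n - 1 + 1 - 1 = n - 1 := by omega
      rw [harith, hwdef, ← pow_mul, ← pow_mul, Nat.mul_comm 2 (n - 1)]
    have hprod1 : ∏ j ∈ ((Finset.Icc 1 n).disjSum (Finset.Icc 1 n)).erase (Sum.inl i),
        (v (Sum.inl i) - v j) = D * ((a - p⁻¹ * a) * Du) := by
      rw [erase_disjSum_inl, Finset.prod_disjSum]
      simp only [hv, Sum.elim_inl, Sum.elim_inr]
      rw [← Finset.mul_prod_erase _ (fun t => a - p⁻¹ * A t) hi]
    have hprod2 : ∏ j ∈ ((Finset.Icc 1 n).disjSum (Finset.Icc 1 n)).erase (Sum.inr i),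
        (v (Sum.inr i) - v j) = (w * p⁻¹ * ((a - p * a) * Dp)) * (w * D) := by
      rw [erase_disjSum_inr, Finset.prod_disjSum]
      simp only [hv, Sum.elim_inl, Sum.elim_inr]
      have h1 : ∀ t ∈ Finset.Icc 1 n, p⁻¹ * a - A t = p⁻¹ * (a - p * A t) := by
        intro t _
        rw [mul_sub, ← mul_assoc, inv_mul_cancel₀ hp, one_mul]
      have h2 : ∀ t ∈ (Finset.Icc 1 n).erase i, p⁻¹ * a - p⁻¹ * A t = p⁻¹ * (a - A t) := by
        intro t _
        rw [mul_sub]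
      rw [Finset.prod_congr rfl h1, Finset.prod_congr rfl h2, Finset.prod_mul_distrib,
        Finset.prod_mul_distrib, Finset.prod_const, Finset.prod_const, Nat.card_Icc, hcarder,
        ← Finset.mul_prod_erase _ (fun t => a - p * A t) hi]
      have hpn : p⁻¹ ^ (n + 1 - 1) = w * p⁻¹ := by
        rw [hwdef, ← pow_succ]
        congr 1
        omega
      rw [hpn, ← hDdef, ← hDpdef]
    rw [heval1, heval2, hprod1, hprod2, Finset.prod_mul_distrib, Finset.prod_mul_distrib,
      ← hDdef, ← hDpdef, ← hDudef]
    have h1 : a - p * a ≠ 0 := by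
      refine sub_ne_zero_of_ne (fun h => hp1 ?_)
      have : (1 : ℂ) * a = p * a := by rw [one_mul, ← h]
      exact (mul_right_cancel₀ ha this).symm
    have h2 : a - p⁻¹ * a ≠ 0 := by
      refine sub_ne_zero_of_ne (fun h => hu1 ?_)
      have : p⁻¹ * a = (1 : ℂ) * a := by rw [one_mul, ← h]
      exact mul_right_cancel₀ ha this
    clear_value N1 N2 w a D Dp Du p
    have h3 : (1 : ℂ) - p ≠ 0 := sub_ne_zero_of_ne (Ne.symm hp1)
    set r : ℂ := 1 - p with hrdef
    have hr : r ≠ 0 := h3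
    have e1 : a - p * a = a * r := by rw [hrdef]; ring
    have e2 : a - p⁻¹ * a = -(a * r * p⁻¹) := by
      rw [hrdef]
      field_simp
      ring
    rw [e1, e2]
    clear_value r
    rw [div_add_div _ _ (by intro h; simp [mul_eq_zero, ha, hr, hD, hDu, inv_eq_zero, hp] at h)
        (by intro h; simp [mul_eq_zero, ha, hr, hD, hDp, hw, inv_eq_zero, hp] at h)]
    rw [div_sub_div _ _ (by simp [hD, hDp]) (by simp [hD, hDu])]
    rw [div_mul_div_comm, div_mul_div_comm, div_eq_div_iff
      (by simp [ha, hD, hDp, hDu]) (by simp [ha, hr, hD, hDp, hDu, hw, hp, sub_eq_zero])]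
    field_simp
    ring
  calc ∑ i ∈ Finset.Icc 1 n, (1 / A i) *
      ((∏ t ∈ Finset.Icc 1 (n - 1), (A i - p * B t) * (A i - p * C t)) /
          (∏ t ∈ (Finset.Icc 1 n).erase i, (A i - A t) * (A i - p * A t))
        - (∏ t ∈ Finset.Icc 1 (n - 1), (A i - B t) * (A i - C t)) /
          ∏ t ∈ (Finset.Icc 1 n).erase i, (A i - A t) * (A i - p⁻¹ * A t))
      = ∑ i ∈ Finset.Icc 1 n, ((1 - p) / p) *
        (P.eval (v (Sum.inl i)) /
            ∏ j ∈ ((Finset.Icc 1 n).disjSum (Finset.Icc 1 n)).erase (Sum.inl i),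
              (v (Sum.inl i) - v j)
         + P.eval (v (Sum.inr i)) /
            ∏ j ∈ ((Finset.Icc 1 n).disjSum (Finset.Icc 1 n)).erase (Sum.inr i),
              (v (Sum.inr i) - v j)) := Finset.sum_congr rfl hterm
    _ = ((1 - p) / p) *
        (∑ i ∈ Finset.Icc 1 n, P.eval (v (Sum.inl i)) /
            ∏ j ∈ ((Finset.Icc 1 n).disjSum (Finset.Icc 1 n)).erase (Sum.inl i),
              (v (Sum.inl i) - v j)
         + ∑ i ∈ Finset.Icc 1 n, P.eval (v (Sum.inr i)) /
            ∏ j ∈ ((Finset.Icc 1 n).disjSum (Finset.Icc 1 n)).erase (Sum.inr i),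
              (v (Sum.inr i) - v j)) := by
        rw [← Finset.mul_sum, Finset.sum_add_distrib]
    _ = 0 := by rw [hsum, mul_zero]
end
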